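/- arXiv:2202.09327 — 7 statements merged into one kernel-verified Lean document; each statement's English description precedes it below -/
import Mathlib

section
/- Let X be a Banach space and let f : X → X be continuously (Fréchet) differentiable. Suppose that for every x ∈ X the derivative f'(x) is an invertible bounded linear operator (a continuous linear isomorphism of X onto itself) and that there is a constant M > 0 such that ‖[f'(x)]⁻¹‖ ≤ M for all x ∈ X. Then f is a bijection of X onto X and its inverse g : X → X is continuously differentiable, i.e. g(f(x)) = x and f(g(x)) = x for all x ∈ X and g ∈ C¹. -/
section HadamardAux
set_option linter.unusedSectionVars false
set_option maxHeartbeats 1000000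

open Set Metric Filter Topology

variable {X : Type*} [NormedAddCommGroup X] [NormedSpace ℝ X] [CompleteSpace X]
variable {f : X → X} {φ : X → X ≃L[ℝ] X} {M : ℝ}

lemma had_approx (hcont : Continuous fun x => (φ x : X →L[ℝ] X))
    (hdf : ∀ x, HasFDerivAt f (φ x : X →L[ℝ] X) x)
    (a : X) {ε : ℝ} (hε : 0 < ε) :
    ∃ r > 0, (∀ w ∈ closedBall a r, ‖(φ w : X →L[ℝ] X) - (φ a : X →L[ℝ] X)‖ ≤ ε) ∧
      ApproximatesLinearOn f (φ a : X →L[ℝ] X) (closedBall a r) ε.toNNReal := by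
  have h1 : ContinuousAt (fun x => (φ x : X →L[ℝ] X)) a := hcont.continuousAt
  rcases Metric.continuousAt_iff.1 h1 ε hε with ⟨r, hr, hball⟩
  have hbnd : ∀ w ∈ closedBall a (r/2), ‖(φ w : X →L[ℝ] X) - (φ a : X →L[ℝ] X)‖ ≤ ε := by
    intro w hw
    have : dist w a < r := lt_of_le_of_lt (mem_closedBall.1 hw) (by linarith)
    have := hball this
    rw [dist_eq_norm] at this
    exact this.le
  refine ⟨r/2, by linarith, hbnd, ?_⟩
  intro u hu v hv
  rw [Real.coe_toNNReal _ hε.le]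
  exact Convex.norm_image_sub_le_of_norm_hasFDerivWithin_le'
    (fun w hw => (hdf w).hasFDerivWithinAt) hbnd (convex_closedBall a (r/2)) hv hu

lemma gb_antilip (hM : 0 < M) (hbound : ∀ x, ‖((φ x).symm : X →L[ℝ] X)‖ ≤ M)
    {a : X} {r : ℝ}
    (hb : ApproximatesLinearOn f (φ a : X →L[ℝ] X) (closedBall a r) ((2*M)⁻¹).toNNReal) :
    ∀ u ∈ closedBall a r, ∀ v ∈ closedBall a r, ‖u - v‖ ≤ 2*M*‖f u - f v‖ := by
  intro u hu v hv
  have h1 := hb u hu v hv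
  rw [Real.coe_toNNReal _ (by positivity)] at h1
  have h2 : ‖u - v‖ ≤ M * ‖(φ a : X →L[ℝ] X) (u - v)‖ := by
    calc ‖u - v‖ = ‖(φ a).symm ((φ a : X →L[ℝ] X) (u - v))‖ := by simp
    _ ≤ ‖((φ a).symm : X →L[ℝ] X)‖ * ‖(φ a : X →L[ℝ] X) (u - v)‖ :=
        ((φ a).symm : X →L[ℝ] X).le_opNorm _
    _ ≤ M * ‖(φ a : X →L[ℝ] X) (u - v)‖ := by
        exact mul_le_mul_of_nonneg_right (hbound a) (norm_nonneg _)
  have h3 : ‖(φ a : X →L[ℝ] X) (u - v)‖ - ‖f u - f v‖ ≤ (2*M)⁻¹ * ‖u - v‖ := by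
    have h4 : ‖(φ a : X →L[ℝ] X) (u - v)‖ - ‖f u - f v‖
        ≤ ‖f u - f v - (φ a : X →L[ℝ] X) (u - v)‖ := by
      calc ‖(φ a : X →L[ℝ] X) (u - v)‖ - ‖f u - f v‖
          ≤ ‖(φ a : X →L[ℝ] X) (u - v) - (f u - f v)‖ := norm_sub_norm_le _ _
        _ = ‖f u - f v - (φ a : X →L[ℝ] X) (u - v)‖ := norm_sub_rev _ _
    linarith
  have hMne : M ≠ 0 := hM.ne'
  have hkey : M * ((2*M)⁻¹ * ‖u - v‖) = ‖u - v‖ / 2 := by field_simp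
  nlinarith [norm_nonneg (u - v), norm_nonneg (f u - f v)]

lemma gb_inj (hM : 0 < M) (hbound : ∀ x, ‖((φ x).symm : X →L[ℝ] X)‖ ≤ M)
    {a : X} {r : ℝ}
    (hb : ApproximatesLinearOn f (φ a : X →L[ℝ] X) (closedBall a r) ((2*M)⁻¹).toNNReal) :
    InjOn f (closedBall a r) := by
  intro u hu v hv huv
  have := gb_antilip hM hbound hb u hu v hv
  rw [huv] at this
  simp only [sub_self, norm_zero, mul_zero] at this
  have : ‖u - v‖ = 0 := le_antisymm this (norm_nonneg _)
  rwa [norm_eq_zero, sub_eq_zero] at this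

lemma gb_surj [Nontrivial X] (hM : 0 < M) (hbound : ∀ x, ‖((φ x).symm : X →L[ℝ] X)‖ ≤ M)
    {a : X} {r : ℝ}
    (hb : ApproximatesLinearOn f (φ a : X →L[ℝ] X) (closedBall a r) ((2*M)⁻¹).toNNReal)
    {ε : ℝ} (hε0 : 0 ≤ ε) (hεr : ε ≤ r) :
    SurjOn f (closedBall a ε) (closedBall (f a) (ε/(2*M))) := by
  have hb' : ApproximatesLinearOn f (φ a : X →L[ℝ] X) (closedBall a ε) ((2*M)⁻¹).toNNReal :=
    hb.mono_set (closedBall_subset_closedBall hεr)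
  have hmain := hb'.surjOn_closedBall_of_nonlinearRightInverse
    (φ a).toNonlinearRightInverse hε0 (subset_refl _)
  refine hmain.mono (subset_refl _) (closedBall_subset_closedBall ?_)
  have hnn : ((φ a).toNonlinearRightInverse.nnnorm : ℝ) = ‖((φ a).symm : X →L[ℝ] X)‖ := rfl
  have hpos : 0 < ‖((φ a).symm : X →L[ℝ] X)‖ := by
    obtain ⟨x, hx⟩ := exists_ne (0 : X)
    by_contra h
    push_neg at h
    have h0 : ‖((φ a).symm : X →L[ℝ] X)‖ = 0 := le_antisymm h (norm_nonneg _)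
    have hxle : ‖x‖ ≤ ‖((φ a).symm : X →L[ℝ] X)‖ * ‖(φ a : X →L[ℝ] X) x‖ := by
      have h5 := (((φ a).symm : X →L[ℝ] X)).le_opNorm ((φ a : X →L[ℝ] X) x)
      simpa using h5
    rw [h0, zero_mul] at hxle
    exact hx (by simpa using le_antisymm hxle (norm_nonneg _))
  have hinv : M⁻¹ ≤ ‖((φ a).symm : X →L[ℝ] X)‖⁻¹ :=
    inv_anti₀ hpos (hbound a)
  rw [hnn, Real.coe_toNNReal _ (by positivity)]
  have h2M : ε / (2*M) = (2*M)⁻¹ * ε := by rw [div_eq_inv_mul]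
  rw [h2M]
  apply mul_le_mul_of_nonneg_right _ hε0
  have : (2*M)⁻¹ = M⁻¹ - (2*M)⁻¹ := by field_simp; ring
  rw [this]
  linarith

lemma had_locinj (hM : 0 < M) (hbound : ∀ x, ‖((φ x).symm : X →L[ℝ] X)‖ ≤ M)
    (hcont : Continuous fun x => (φ x : X →L[ℝ] X))
    (hdf : ∀ x, HasFDerivAt f (φ x : X →L[ℝ] X) x) :
    IsLocallyInjective f := by
  intro a
  obtain ⟨r, hr, -, hb⟩ := had_approx hcont hdf a (ε := (2*M)⁻¹) (by positivity)
  exact ⟨ball a r, isOpen_ball, mem_ball_self hr,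
    (gb_inj hM hbound hb).mono ball_subset_closedBall⟩

lemma had_sep : IsSeparatedMap f := T2Space.isSeparatedMap f

lemma contOn_of_bound {z : ℝ → X} {A B L : ℝ}
    (h : ∀ s ∈ Icc A B, ∀ t ∈ Icc A B, ‖z s - z t‖ ≤ L*|s-t|) :
    ContinuousOn z (Icc A B) := by
  intro t ht
  rw [Metric.continuousWithinAt_iff]
  intro ε hε
  refine ⟨ε/(|L|+1), by positivity, fun s hs hst => ?_⟩
  have h1 := h s hs t ht
  have h2 : L * |s - t| ≤ |L| * |s - t| :=
    mul_le_mul_of_nonneg_right (le_abs_self L) (abs_nonneg _)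
  have h3 : |L| * |s - t| < (|L|+1) * (ε/(|L|+1)) := by
    have : |s - t| < ε/(|L|+1) := by rwa [dist_eq_norm, Real.norm_eq_abs] at hst
    have habs : 0 ≤ |L| := abs_nonneg L
    nlinarith [abs_nonneg (s - t)]
  have h4 : (|L|+1) * (ε/(|L|+1)) = ε := by field_simp
  rw [dist_eq_norm]
  nlinarith

lemma had_unif (hM : 0 < M) (hcont : Continuous fun x => (φ x : X →L[ℝ] X))
    (hdf : ∀ x, HasFDerivAt f (φ x : X →L[ℝ] X) x)
    {K : Set X} (hK : IsCompact K) :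
    ∃ δ > 0, ∀ a ∈ K,
      ApproximatesLinearOn f (φ a : X →L[ℝ] X) (closedBall a δ) ((2*M)⁻¹).toNNReal := by
  have hpt : ∀ p : X, ∃ r > 0,
      (∀ w ∈ closedBall p r, ‖(φ w : X →L[ℝ] X) - (φ p : X →L[ℝ] X)‖ ≤ (4*M)⁻¹) ∧
      ApproximatesLinearOn f (φ p : X →L[ℝ] X) (closedBall p r) ((4*M)⁻¹).toNNReal :=
    fun p => had_approx hcont hdf p (by positivity)
  choose r hr hφ happ using hpt
  rcases hK.elim_nhds_subcover (fun p => ball p (r p / 2))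
    (fun p _ => ball_mem_nhds p (by have := hr p; linarith)) with ⟨t, htK, hcover⟩
  by_cases hne : t.Nonempty
  · refine ⟨t.inf' hne (fun p => r p / 2), ?_, ?_⟩
    · rw [gt_iff_lt, Finset.lt_inf'_iff]
      intro p _
      have := hr p; linarith
    · intro a ha
      obtain ⟨p, hpt', hap⟩ : ∃ p ∈ t, a ∈ ball p (r p / 2) := by
        have := hcover ha
        simpa using this
      set δ := t.inf' hne (fun p => r p / 2) with hδ
      have hδle : δ ≤ r p / 2 := Finset.inf'_le _ hpt'
      have hsub : closedBall a δ ⊆ closedBall p (r p) := by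
        intro w hw
        rw [mem_closedBall] at hw ⊢
        have h1 : dist w p ≤ dist w a + dist a p := dist_triangle _ _ _
        have h2 : dist a p < r p / 2 := mem_ball.1 hap
        linarith
      have hap' : a ∈ closedBall p (r p) := by
        rw [mem_closedBall]
        have h2 : dist a p < r p / 2 := mem_ball.1 hap
        have := hr p; linarith
      intro u hu v hv
      have h1 := happ p u (hsub hu) v (hsub hv)
      rw [Real.coe_toNNReal _ (by positivity)] at h1
      rw [Real.coe_toNNReal _ (by positivity)]
      have h2 : ‖(φ p : X →L[ℝ] X) - (φ a : X →L[ℝ] X)‖ ≤ (4*M)⁻¹ := by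
        have h3 := hφ p a hap'
        rwa [norm_sub_rev] at h3
      have hsplit : f u - f v - (φ a : X →L[ℝ] X) (u - v)
          = (f u - f v - (φ p : X →L[ℝ] X) (u - v))
            + ((φ p : X →L[ℝ] X) (u - v) - (φ a : X →L[ℝ] X) (u - v)) := by abel
      have h4 : ‖(φ p : X →L[ℝ] X) (u - v) - (φ a : X →L[ℝ] X) (u - v)‖
          ≤ (4*M)⁻¹ * ‖u - v‖ := by
        have h5 : (φ p : X →L[ℝ] X) (u - v) - (φ a : X →L[ℝ] X) (u - v)
            = ((φ p : X →L[ℝ] X) - (φ a : X →L[ℝ] X)) (u - v) := by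
          simp [ContinuousLinearMap.sub_apply]
        rw [h5]
        calc ‖((φ p : X →L[ℝ] X) - (φ a : X →L[ℝ] X)) (u - v)‖
            ≤ ‖(φ p : X →L[ℝ] X) - (φ a : X →L[ℝ] X)‖ * ‖u - v‖ :=
              ContinuousLinearMap.le_opNorm _ _
          _ ≤ (4*M)⁻¹ * ‖u - v‖ := mul_le_mul_of_nonneg_right h2 (norm_nonneg _)
      calc ‖f u - f v - (φ a : X →L[ℝ] X) (u - v)‖
          ≤ ‖f u - f v - (φ p : X →L[ℝ] X) (u - v)‖
            + ‖(φ p : X →L[ℝ] X) (u - v) - (φ a : X →L[ℝ] X) (u - v)‖ := by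
            rw [hsplit]; exact norm_add_le _ _
        _ ≤ (4*M)⁻¹ * ‖u - v‖ + (4*M)⁻¹ * ‖u - v‖ := add_le_add h1 h4
        _ = (2*M)⁻¹ * ‖u - v‖ := by
            have : M ≠ 0 := hM.ne'
            field_simp
            ring
  · refine ⟨1, one_pos, fun a ha => ?_⟩
    exfalso
    rw [Finset.not_nonempty_iff_eq_empty] at hne
    have := hcover ha
    simp [hne] at this

lemma had_lift [Nontrivial X] (hM : 0 < M)
    (hbound : ∀ x, ‖((φ x).symm : X →L[ℝ] X)‖ ≤ M)
    (hcont : Continuous fun x => (φ x : X →L[ℝ] X))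
    (hdf : ∀ x, HasFDerivAt f (φ x : X →L[ℝ] X) x) (y : X) :
    ∃ z : ℝ → X, z 0 = 0 ∧ (∀ s ∈ Icc (0:ℝ) 1, f (z s) = f 0 + s • (y - f 0)) ∧
      (∀ s ∈ Icc (0:ℝ) 1, ∀ s' ∈ Icc (0:ℝ) 1,
        ‖z s - z s'‖ ≤ (2*M*‖y - f 0‖)*|s - s'|) := by
  classical
  set v := y - f 0 with hv
  set γ : ℝ → X := fun s => f 0 + s • v with hγdef
  set L : ℝ := 2*M*‖v‖ with hLdef
  have hL0 : 0 ≤ L := by positivity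
  have hγsub : ∀ s s' : ℝ, γ s - γ s' = (s - s') • v := by
    intro s s'
    show f 0 + s • v - (f 0 + s' • v) = (s - s') • v
    rw [add_sub_add_left_eq_sub, ← sub_smul]
  have hγnorm : ∀ s s' : ℝ, ‖γ s - γ s'‖ = |s - s'| * ‖v‖ := by
    intro s s'; rw [hγsub, norm_smul, Real.norm_eq_abs]
  have hγcont : Continuous γ := continuous_const.add (continuous_id.smul continuous_const)
  have hγ0 : γ 0 = f 0 := by simp [hγdef]
  set S : Set ℝ := {t | 0 ≤ t ∧ t ≤ 1 ∧ ∃ z : ℝ → X, z 0 = 0 ∧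
    (∀ s ∈ Icc (0:ℝ) t, f (z s) = γ s) ∧
    (∀ s ∈ Icc (0:ℝ) t, ∀ s' ∈ Icc (0:ℝ) t, ‖z s - z s'‖ ≤ L * |s - s'|)} with hSdef
  have hS0 : (0:ℝ) ∈ S := by
    refine ⟨le_rfl, zero_le_one, fun _ => 0, rfl, ?_, ?_⟩
    · intro s hs
      have hs0 : s = 0 := le_antisymm hs.2 hs.1
      rw [hs0, hγ0]
    · intro s _ s' _
      simp only [sub_self, norm_zero]
      positivity
  have hSbdd : BddAbove S := ⟨1, fun t ht => ht.2.1⟩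
  have hdown : ∀ t ∈ S, ∀ t' : ℝ, 0 ≤ t' → t' ≤ t → t' ∈ S := by
    rintro t ⟨ht0, ht1, z, hz0, hzf, hzl⟩ t' h0' h1'
    exact ⟨h0', le_trans h1' ht1, z, hz0, fun s hs => hzf s ⟨hs.1, hs.2.trans h1'⟩,
      fun s hs s' hs' => hzl s ⟨hs.1, hs.2.trans h1'⟩ s' ⟨hs'.1, hs'.2.trans h1'⟩⟩
  have hchoice : ∀ t : ℝ, t ∈ S → ∃ z : ℝ → X, z 0 = 0 ∧
      (∀ s ∈ Icc (0:ℝ) t, f (z s) = γ s) ∧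
      (∀ s ∈ Icc (0:ℝ) t, ∀ s' ∈ Icc (0:ℝ) t, ‖z s - z s'‖ ≤ L * |s - s'|) :=
    fun t ht => ht.2.2
  choose! zf hz0 hzf hzl using hchoice
  have hScont : ∀ t, t ∈ S → ContinuousOn (zf t) (Icc 0 t) :=
    fun t ht => contOn_of_bound (hzl t ht)
  have hcoh : ∀ t ∈ S, ∀ t' ∈ S, t ≤ t' → ∀ s ∈ Icc (0:ℝ) t, zf t s = zf t' s := by
    intro t ht t' ht' htt'
    have hIccsub : Icc (0:ℝ) t ⊆ Icc (0:ℝ) t' := Icc_subset_Icc le_rfl htt'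
    have heq := (T2Space.isSeparatedMap f).eqOn_of_comp_eqOn (had_locinj hM hbound hcont hdf)
      isPreconnected_Icc (hScont t ht) ((hScont t' ht').mono hIccsub)
      (fun s hs => by
        show f (zf t s) = f (zf t' s)
        rw [hzf t ht s hs, hzf t' ht' s (hIccsub hs)])
      (Set.mem_Icc.mpr ⟨le_rfl, ht.1⟩)
      (by rw [hz0 t ht, hz0 t' ht'])
    exact fun s hs => heq hs
  set τ := sSup S with hτdef
  have hτ0 : 0 ≤ τ := le_csSup hSbdd hS0
  have hτ1 : τ ≤ 1 := csSup_le ⟨0, hS0⟩ (fun t ht => ht.2.1)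
  have hmemlt : ∀ t : ℝ, 0 ≤ t → t < τ → t ∈ S := by
    intro t h0 h2
    obtain ⟨t', ht'S, htt'⟩ := exists_lt_of_lt_csSup ⟨0, hS0⟩ h2
    exact hdown t' ht'S t h0 htt'.le
  have hτS : τ ∈ S := by
    rcases eq_or_lt_of_le hτ0 with h0 | h0
    · rw [← h0]; exact hS0
    · set W : ℝ → X := fun s => zf s s with hW
      have hWeq : ∀ t ∈ S, ∀ s, 0 ≤ s → s ≤ t → W s = zf t s := by
        intro t ht s h1 h2
        exact hcoh s (hdown t ht s h1 h2) t ht h2 s ⟨h1, le_rfl⟩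
      have hWf : ∀ s, 0 ≤ s → s < τ → f (W s) = γ s := by
        intro s h1 h2
        exact hzf s (hmemlt s h1 h2) s ⟨h1, le_rfl⟩
      have hWlip : ∀ s, 0 ≤ s → s < τ → ∀ s', 0 ≤ s' → s' < τ →
          ‖W s - W s'‖ ≤ L * |s - s'| := by
        intro s h1 h2 s' h1' h2'
        rcases le_total s s' with h | h
        · have ht' := hmemlt s' h1' h2'
          rw [hWeq s' ht' s h1 h, hWeq s' ht' s' h1' le_rfl]
          exact hzl s' ht' s ⟨h1, h⟩ s' ⟨h1', le_rfl⟩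
        · have ht := hmemlt s h1 h2
          rw [hWeq s ht s h1 le_rfl, hWeq s ht s' h1' h]
          exact hzl s ht s ⟨h1, le_rfl⟩ s' ⟨h1', h⟩
      set u : ℕ → X := fun n => W (τ - τ/(n+1)) with hu
      have harg : ∀ n : ℕ, 0 ≤ τ - τ/(n+1) ∧ τ - τ/(n+1) < τ := by
        intro n
        have hn1 : (0:ℝ) < (n:ℝ)+1 := by positivity
        constructor
        · have h2 : τ/((n:ℝ)+1) ≤ τ := by
            rw [div_le_iff₀ hn1]
            nlinarith
          linarith
        · have h2 : 0 < τ/((n:ℝ)+1) := by positivity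
          linarith
      have hdivle : ∀ n N : ℕ, N ≤ n → τ/((n:ℝ)+1) ≤ τ/((N:ℝ)+1) := by
        intro n N h
        apply div_le_div_of_nonneg_left hτ0 (by positivity)
        have : (N:ℝ) ≤ (n:ℝ) := Nat.cast_le.2 h
        linarith
      have hcauchy : CauchySeq u := by
        apply cauchySeq_of_le_tendsto_0 (fun N : ℕ => L * (τ/((N:ℝ)+1)))
        · intro n m N hn hm
          have e1 : dist (u n) (u m) = ‖W (τ - τ/((n:ℝ)+1)) - W (τ - τ/((m:ℝ)+1))‖ :=
            dist_eq_norm _ _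
          have e2 := hWlip _ (harg n).1 (harg n).2 _ (harg m).1 (harg m).2
          have e3 : |(τ - τ/((n:ℝ)+1)) - (τ - τ/((m:ℝ)+1))| ≤ τ/((N:ℝ)+1) := by
            have d1 : 0 < τ/((n:ℝ)+1) := by positivity
            have d2 : 0 < τ/((m:ℝ)+1) := by positivity
            have d3 := hdivle n N hn
            have d4 := hdivle m N hm
            rw [abs_sub_le_iff]
            constructor <;> [skip; skip] <;> nlinarith
          rw [e1]
          calc ‖W (τ - τ/((n:ℝ)+1)) - W (τ - τ/((m:ℝ)+1))‖
              ≤ L * |(τ - τ/((n:ℝ)+1)) - (τ - τ/((m:ℝ)+1))| := e2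
            _ ≤ L * (τ/((N:ℝ)+1)) := mul_le_mul_of_nonneg_left e3 hL0
        · have e4 : (fun N : ℕ => L * (τ/((N:ℝ)+1)))
              = fun N : ℕ => (L*τ) * (1/((N:ℝ)+1)) := by
            funext N; ring
          rw [e4]
          have := tendsto_one_div_add_atTop_nhds_zero_nat.const_mul (L*τ)
          simpa using this
      obtain ⟨b, hbl⟩ := cauchySeq_tendsto_of_complete hcauchy
      have halim : Tendsto (fun n : ℕ => τ - τ/((n:ℝ)+1)) atTop (𝓝 τ) := by
        have h1 : Tendsto (fun n : ℕ => τ/((n:ℝ)+1)) atTop (𝓝 0) := by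
          have e4 : (fun n : ℕ => τ/((n:ℝ)+1)) = fun n : ℕ => τ * (1/((n:ℝ)+1)) := by
            funext n; ring
          rw [e4]
          have := tendsto_one_div_add_atTop_nhds_zero_nat.const_mul τ
          simpa using this
        have h2 := (tendsto_const_nhds (x := τ) (f := atTop (α := ℕ))).sub h1
        simpa using h2
      set Z : ℝ → X := fun s => if s < τ then W s else b with hZ
      have hZpair : ∀ s ∈ Icc (0:ℝ) τ, ∀ s' ∈ Icc (0:ℝ) τ, s ≤ s' →
          ‖Z s - Z s'‖ ≤ L * |s - s'| := by
        intro s hs s' hs' hss'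
        by_cases h2 : s' < τ
        · have h3 : s < τ := lt_of_le_of_lt hss' h2
          show ‖(if s < τ then W s else b) - (if s' < τ then W s' else b)‖ ≤ L * |s - s'|
          rw [if_pos h3, if_pos h2]
          exact hWlip s hs.1 h3 s' hs'.1 h2
        · have hs'τ : s' = τ := le_antisymm hs'.2 (not_lt.1 h2)
          by_cases h3 : s < τ
          · show ‖(if s < τ then W s else b) - (if s' < τ then W s' else b)‖ ≤ L * |s - s'|
            rw [if_pos h3, if_neg h2]
            have t1 : Tendsto (fun n : ℕ => ‖W s - u n‖) atTop (𝓝 ‖W s - b‖) :=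
              (tendsto_const_nhds.sub hbl).norm
            have t2 : Tendsto (fun n : ℕ => L * |s - (τ - τ/((n:ℝ)+1))|) atTop
                (𝓝 (L * |s - τ|)) := by
              have := ((halim.const_sub s).abs).const_mul L
              simpa using this
            have t3 : ∀ n : ℕ, ‖W s - u n‖ ≤ L * |s - (τ - τ/((n:ℝ)+1))| := fun n =>
              hWlip s hs.1 h3 _ (harg n).1 (harg n).2
            have := le_of_tendsto_of_tendsto' t1 t2 t3
            rw [hs'τ]
            exact this
          · have hsτ : s = τ := le_antisymm hs.2 (not_lt.1 h3)
            show ‖(if s < τ then W s else b) - (if s' < τ then W s' else b)‖ ≤ L * |s - s'|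
            rw [if_neg h3, if_neg h2, hsτ, hs'τ]
            simp [hL0]
      refine ⟨hτ0, hτ1, Z, ?_, ?_, ?_⟩
      · show (if (0:ℝ) < τ then W 0 else b) = 0
        rw [if_pos h0]
        exact hz0 0 hS0
      · intro s hs
        by_cases h3 : s < τ
        · show f (if s < τ then W s else b) = γ s
          rw [if_pos h3]
          exact hWf s hs.1 h3
        · have hsτ : s = τ := le_antisymm hs.2 (not_lt.1 h3)
          show f (if s < τ then W s else b) = γ s
          rw [if_neg h3, hsτ]
          have t1 : Tendsto (fun n : ℕ => f (u n)) atTop (𝓝 (f b)) :=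
            ((hdf b).continuousAt.tendsto).comp hbl
          have t2 : ∀ n : ℕ, f (u n) = γ (τ - τ/((n:ℝ)+1)) := fun n =>
            hWf _ (harg n).1 (harg n).2
          have t3 : Tendsto (fun n : ℕ => γ (τ - τ/((n:ℝ)+1))) atTop (𝓝 (γ τ)) :=
            (hγcont.tendsto τ).comp halim
          exact tendsto_nhds_unique (t1.congr t2) t3
      · intro s hs s' hs'
        rcases le_total s s' with h | h
        · exact hZpair s hs s' hs' h
        · rw [norm_sub_rev, abs_sub_comm]
          exact hZpair s' hs' s hs h
  have hτeq : τ = 1 := by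
    by_contra hne
    have hτlt : τ < 1 := lt_of_le_of_ne hτ1 hne
    set bb := zf τ τ with hbb
    have hfbb : f bb = γ τ := hzf τ hτS τ ⟨hτ0, le_rfl⟩
    obtain ⟨r, hrpos, -, hb⟩ := had_approx hcont hdf bb (ε := (2*M)⁻¹) (by positivity)
    have hsurj := gb_surj hM hbound hb hrpos.le le_rfl
    have hanti := gb_antilip hM hbound hb
    set θ := min (1 - τ) (r/(2*M*‖v‖ + 1)) with hθ
    have hθpos : 0 < θ := lt_min (by linarith) (by positivity)
    have hθv : θ * ‖v‖ ≤ r/(2*M) := by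
      have h1 : θ ≤ r/(2*M*‖v‖+1) := min_le_right _ _
      have h2 : (0:ℝ) ≤ ‖v‖ := norm_nonneg v
      have h3 : θ * ‖v‖ ≤ r/(2*M*‖v‖+1) * ‖v‖ := mul_le_mul_of_nonneg_right h1 h2
      have h4 : r/(2*M*‖v‖+1) * ‖v‖ ≤ r/(2*M) := by
        rw [div_mul_eq_mul_div, div_le_div_iff₀ (by positivity) (by positivity)]
        nlinarith
      linarith
    set τ' := τ + θ with hτ'
    have hτ'1 : τ' ≤ 1 := by
      have := min_le_left (1 - τ) (r/(2*M*‖v‖ + 1))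
      simp only [hτ']
      linarith [hθ ▸ this]
    have hmem : ∀ s : ℝ, τ < s → s ≤ τ' → γ s ∈ closedBall (f bb) (r/(2*M)) := by
      intro s h1 h2
      rw [mem_closedBall, dist_eq_norm, hfbb, hγnorm]
      have e1 : |s - τ| = s - τ := abs_of_nonneg (by linarith)
      rw [e1]
      have e2 : s - τ ≤ θ := by simp only [hτ'] at h2; linarith
      have := mul_le_mul_of_nonneg_right e2 (norm_nonneg v)
      linarith
    have hex : ∀ s : ℝ, τ < s → s ≤ τ' → ∃ w, w ∈ closedBall bb r ∧ f w = γ s := by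
      intro s h1 h2
      obtain ⟨w, hw1, hw2⟩ := hsurj (hmem s h1 h2)
      exact ⟨w, hw1, hw2⟩
    choose! w hw1 hw2 using hex
    set Z' : ℝ → X := fun s => if s ≤ τ then zf τ s else w s with hZ'
    have hwlip : ∀ s, τ < s → s ≤ τ' → ∀ s', τ < s' → s' ≤ τ' →
        ‖w s - w s'‖ ≤ L * |s - s'| := by
      intro s a1 a2 s' b1 b2
      have e1 := hanti (w s) (hw1 s a1 a2) (w s') (hw1 s' b1 b2)
      rw [hw2 s a1 a2, hw2 s' b1 b2, hγnorm] at e1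
      calc ‖w s - w s'‖ ≤ 2*M*(|s - s'| * ‖v‖) := e1
        _ = L * |s - s'| := by rw [hLdef]; ring
    have hwz : ∀ s', τ < s' → s' ≤ τ' → ‖bb - w s'‖ ≤ L * (s' - τ) := by
      intro s' b1 b2
      have e1 := hanti bb (mem_closedBall_self hrpos.le) (w s') (hw1 s' b1 b2)
      rw [hw2 s' b1 b2, hfbb, hγnorm] at e1
      have e2 : |τ - s'| = s' - τ := by rw [abs_sub_comm]; exact abs_of_nonneg (by linarith)
      rw [e2] at e1
      calc ‖bb - w s'‖ ≤ 2*M*((s' - τ) * ‖v‖) := e1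
        _ = L * (s' - τ) := by rw [hLdef]; ring
    have hpair : ∀ s ∈ Icc (0:ℝ) τ', ∀ s' ∈ Icc (0:ℝ) τ', s ≤ s' →
        ‖Z' s - Z' s'‖ ≤ L * |s - s'| := by
      intro s hs s' hs' hss'
      by_cases h2 : s' ≤ τ
      · have h3 : s ≤ τ := le_trans hss' h2
        show ‖(if s ≤ τ then zf τ s else w s) - (if s' ≤ τ then zf τ s' else w s')‖
          ≤ L * |s - s'|
        rw [if_pos h3, if_pos h2]
        exact hzl τ hτS s ⟨hs.1, h3⟩ s' ⟨hs'.1, h2⟩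
      · push_neg at h2
        by_cases h3 : s ≤ τ
        · show ‖(if s ≤ τ then zf τ s else w s) - (if s' ≤ τ then zf τ s' else w s')‖
            ≤ L * |s - s'|
          rw [if_pos h3, if_neg (not_le.2 h2)]
          have e1 : ‖zf τ s - w s'‖ ≤ ‖zf τ s - bb‖ + ‖bb - w s'‖ :=
            norm_sub_le_norm_sub_add_norm_sub _ _ _
          have e2 : ‖zf τ s - bb‖ ≤ L * (τ - s) := by
            have := hzl τ hτS s ⟨hs.1, h3⟩ τ ⟨hτ0, le_rfl⟩
            rwa [abs_of_nonpos (by linarith), neg_sub] at this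
          have e3 := hwz s' h2 hs'.2
          have e4 : |s - s'| = s' - s := by
            rw [abs_sub_comm]; exact abs_of_nonneg (by linarith)
          rw [e4]
          have : L * (τ - s) + L * (s' - τ) = L * (s' - s) := by ring
          linarith
        · push_neg at h3
          show ‖(if s ≤ τ then zf τ s else w s) - (if s' ≤ τ then zf τ s' else w s')‖
            ≤ L * |s - s'|
          rw [if_neg (not_le.2 h3), if_neg (not_le.2 h2)]
          exact hwlip s h3 hs.2 s' h2 hs'.2
    have hτ'S : τ' ∈ S := by
      refine ⟨by linarith, hτ'1, Z', ?_, ?_, ?_⟩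
      · show (if (0:ℝ) ≤ τ then zf τ 0 else w 0) = 0
        rw [if_pos hτ0]
        exact hz0 τ hτS
      · intro s hs
        by_cases h3 : s ≤ τ
        · show f (if s ≤ τ then zf τ s else w s) = γ s
          rw [if_pos h3]
          exact hzf τ hτS s ⟨hs.1, h3⟩
        · push_neg at h3
          show f (if s ≤ τ then zf τ s else w s) = γ s
          rw [if_neg (not_le.2 h3)]
          exact hw2 s h3 hs.2
      · intro s hs s' hs'
        rcases le_total s s' with h | h
        · exact hpair s hs s' hs' h
        · rw [norm_sub_rev, abs_sub_comm]
          exact hpair s' hs' s hs h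
    have : τ' ≤ τ := le_csSup hSbdd hτ'S
    simp only [hτ'] at this
    linarith
  rw [hτeq] at hτS
  obtain ⟨-, -, z, hz0', hzf', hzl'⟩ := hτS
  exact ⟨z, hz0', hzf', hzl'⟩


end HadamardAux

set_option maxHeartbeats 1000000 in
open Set Metric Filter Topology in
/-- **Hadamard's global inverse function theorem.**
If `f : X → X` is `C¹` on a Banach space `X`, with derivative `φ x` at every
point `x` being a continuous linear isomorphism whose inverse is uniformly
bounded by `M`, then `f` is bijective with a `C¹` inverse. -/
theorem hadamard_global_inverse
    {X : Type*} [NormedAddCommGroup X] [NormedSpace ℝ X] [CompleteSpace X]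
    (f : X → X) (φ : X → X ≃L[ℝ] X) (M : ℝ) (hM : 0 < M)
    (hdf : ∀ x, HasFDerivAt f (φ x : X →L[ℝ] X) x)
    (hcont : Continuous fun x => (φ x : X →L[ℝ] X))
    (hbound : ∀ x, ‖((φ x).symm : X →L[ℝ] X)‖ ≤ M) :
    ∃ g : X → X, (∀ x, g (f x) = x) ∧ (∀ x, f (g x) = x) ∧ ContDiff ℝ 1 g := by

  classical
  by_cases hX : Subsingleton X
  · exact ⟨id, fun x => Subsingleton.elim _ _, fun x => Subsingleton.elim _ _, contDiff_id⟩
  haveI : Nontrivial X := not_subsingleton_iff_nontrivial.mp hX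
  have hfcont : Continuous f := continuous_iff_continuousAt.2 fun x => (hdf x).continuousAt
  have h01 : (1:ℝ) ∈ Icc (0:ℝ) 1 := ⟨zero_le_one, le_rfl⟩
  have h00 : (0:ℝ) ∈ Icc (0:ℝ) 1 := ⟨le_rfl, zero_le_one⟩
  choose Z hZ0 hZf hZl using had_lift hM hbound hcont hdf
  set g : X → X := fun y => Z y 1 with hg
  have hright : ∀ y, f (g y) = y := by
    intro y
    have := hZf y 1 h01
    simpa using this
  have hg0 : g (f 0) = 0 := by
    have h1 := hZl (f 0) 1 h01 0 h00
    simp only [sub_self, norm_zero, mul_zero, zero_mul] at h1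
    have h2 : Z (f 0) 1 = Z (f 0) 0 := by
      have h3 : Z (f 0) 1 - Z (f 0) 0 = 0 := norm_le_zero_iff.1 h1
      exact sub_eq_zero.1 h3
    show Z (f 0) 1 = 0
    rw [h2, hZ0 (f 0)]
  -- local Lipschitz estimate for g
  have hglip : ∀ y₀ : X, ∃ ε > 0, ∀ y : X, dist y y₀ < ε →
      ‖g y - g y₀‖ ≤ 2*M*‖y - y₀‖ := by
    intro y₀
    set z := Z y₀ with hz
    have hzcont : ContinuousOn z (Icc 0 1) := contOn_of_bound (hZl y₀)
    have hK : IsCompact (z '' Icc 0 1) := isCompact_Icc.image_of_continuousOn hzcont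
    obtain ⟨δ, hδpos, hδ⟩ := had_unif hM hcont hdf hK
    have hmemK : ∀ t ∈ Icc (0:ℝ) 1, z t ∈ z '' Icc 0 1 := fun t ht => mem_image_of_mem z ht
    have hanti : ∀ t ∈ Icc (0:ℝ) 1, ∀ u ∈ closedBall (z t) δ, ∀ v ∈ closedBall (z t) δ,
        ‖u - v‖ ≤ 2*M*‖f u - f v‖ :=
      fun t ht => gb_antilip hM hbound (hδ (z t) (hmemK t ht))
    have hsurjt : ∀ t ∈ Icc (0:ℝ) 1,
        SurjOn f (closedBall (z t) (δ/2)) (closedBall (f (z t)) ((δ/2)/(2*M))) :=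
      fun t ht => gb_surj hM hbound (hδ (z t) (hmemK t ht)) (by positivity) (by linarith)
    refine ⟨(δ/2)/(2*M), by positivity, fun y hy => ?_⟩
    have hyn : ‖y - y₀‖ < (δ/2)/(2*M) := by rwa [← dist_eq_norm]
    -- construct the comparison lift w
    have hwex : ∀ t ∈ Icc (0:ℝ) 1, ∃ w, w ∈ closedBall (z t) (δ/2) ∧
        f w = f 0 + t • (y - f 0) := by
      intro t ht
      have hmem : f 0 + t • (y - f 0) ∈ closedBall (f (z t)) ((δ/2)/(2*M)) := by
        rw [mem_closedBall, dist_eq_norm, hZf y₀ t ht]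
        have e1 : f 0 + t • (y - f 0) - (f 0 + t • (y₀ - f 0)) = t • (y - y₀) := by
          rw [add_sub_add_left_eq_sub, ← smul_sub]
          congr 1
          abel
        rw [e1, norm_smul, Real.norm_eq_abs, abs_of_nonneg ht.1]
        have e2 : t * ‖y - y₀‖ ≤ 1 * ‖y - y₀‖ :=
          mul_le_mul_of_nonneg_right ht.2 (norm_nonneg _)
        rw [one_mul] at e2
        linarith
      obtain ⟨w, hw1, hw2⟩ := hsurjt t ht hmem
      exact ⟨w, hw1, hw2⟩
    choose! w hw1 hw2 using hwex
    have hw0 : w 0 = 0 := by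
      have inj := gb_inj hM hbound (hδ (z 0) (hmemK 0 h00))
      have m1 : w 0 ∈ closedBall (z 0) δ :=
        closedBall_subset_closedBall (by linarith) (hw1 0 h00)
      have m2 : (0:X) ∈ closedBall (z 0) δ := by
        rw [mem_closedBall, hz, hZ0 y₀]
        simp [hδpos.le]
      apply inj m1 m2
      rw [hw2 0 h00]
      simp
    -- local Lipschitz bound for w, with uniform scale
    set L₀ : ℝ := 2*M*‖y₀ - f 0‖ with hL₀
    have hL₀0 : 0 ≤ L₀ := by positivity
    set η : ℝ := (δ/4)/(L₀+1) with hη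
    have hηpos : 0 < η := by positivity
    have hwloc : ∀ t ∈ Icc (0:ℝ) 1, ∀ s ∈ Icc (0:ℝ) 1, |s - t| ≤ η →
        ‖w s - w t‖ ≤ 2*M*(|s - t| * ‖y - f 0‖) := by
      intro t ht s hs hst
      have e1 : ‖z s - z t‖ ≤ δ/4 := by
        have e0 := hZl y₀ s hs t ht
        have e2 : L₀ * |s - t| ≤ L₀ * η := mul_le_mul_of_nonneg_left hst hL₀0
        have e3 : L₀ * η ≤ δ/4 := by
          have e4 : L₀ * η = (δ/4) * (L₀/(L₀+1)) := by rw [hη]; ring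
          have e5 : L₀/(L₀+1) ≤ 1 := by
            rw [div_le_one (by positivity)]; linarith
          rw [e4]
          nlinarith
        calc ‖z s - z t‖ ≤ L₀ * |s - t| := e0
          _ ≤ δ/4 := le_trans e2 e3
      have m1 : w s ∈ closedBall (z t) δ := by
        rw [mem_closedBall]
        have d1 : dist (w s) (z s) ≤ δ/2 := mem_closedBall.1 (hw1 s hs)
        have d2 : dist (z s) (z t) ≤ δ/4 := by rwa [dist_eq_norm]
        calc dist (w s) (z t) ≤ dist (w s) (z s) + dist (z s) (z t) := dist_triangle _ _ _
          _ ≤ δ := by linarith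
      have m2 : w t ∈ closedBall (z t) δ :=
        closedBall_subset_closedBall (by linarith) (hw1 t ht)
      have e6 := hanti t ht (w s) m1 (w t) m2
      rw [hw2 s hs, hw2 t ht] at e6
      have e7 : f 0 + s • (y - f 0) - (f 0 + t • (y - f 0)) = (s - t) • (y - f 0) := by
        rw [add_sub_add_left_eq_sub, ← sub_smul]
      rw [e7, norm_smul, Real.norm_eq_abs] at e6
      exact e6
    have hwcont : ContinuousOn w (Icc 0 1) := by
      intro t ht
      rw [Metric.continuousWithinAt_iff]
      intro ε' hε'
      refine ⟨min η (ε'/(2*M*‖y - f 0‖+1)), by positivity, fun s hs hst => ?_⟩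
      have hst1 : |s - t| ≤ η := by
        have := lt_of_lt_of_le hst (min_le_left _ _)
        rw [dist_eq_norm, Real.norm_eq_abs] at this
        exact this.le
      have hst2 : |s - t| < ε'/(2*M*‖y - f 0‖+1) := by
        have := lt_of_lt_of_le hst (min_le_right _ _)
        rwa [dist_eq_norm, Real.norm_eq_abs] at this
      have e8 := hwloc t ht s hs hst1
      rw [dist_eq_norm]
      have e9 : 2*M*(|s - t| * ‖y - f 0‖) < ε' := by
        have p1 : (0:ℝ) ≤ 2*M*‖y - f 0‖ := by positivity
        have p2 : 2*M*(|s - t| * ‖y - f 0‖) = (2*M*‖y - f 0‖) * |s - t| := by ring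
        rw [p2]
        calc (2*M*‖y - f 0‖) * |s - t| ≤ (2*M*‖y - f 0‖+1) * |s - t| := by
              nlinarith [abs_nonneg (s - t)]
          _ < (2*M*‖y - f 0‖+1) * (ε'/(2*M*‖y - f 0‖+1)) := by
              apply mul_lt_mul_of_pos_left hst2 (by positivity)
          _ = ε' := by field_simp
      linarith
    -- uniqueness: Z y agrees with w
    have huniq := (T2Space.isSeparatedMap f).eqOn_of_comp_eqOn
      (had_locinj hM hbound hcont hdf) isPreconnected_Icc
      (contOn_of_bound (hZl y)) hwcont
      (fun s hs => by
        show f (Z y s) = f (w s)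
        rw [hZf y s hs, hw2 s hs])
      h00 (by rw [hZ0 y, hw0])
    have hend : g y = w 1 := huniq h01
    have m1 : w 1 ∈ closedBall (z 1) δ :=
      closedBall_subset_closedBall (by linarith) (hw1 1 h01)
    have m2 : z 1 ∈ closedBall (z 1) δ := mem_closedBall_self hδpos.le
    have e10 := hanti 1 h01 (w 1) m1 (z 1) m2
    rw [hw2 1 h01, hZf y₀ 1 h01] at e10
    have e11 : f 0 + (1:ℝ) • (y - f 0) - (f 0 + (1:ℝ) • (y₀ - f 0)) = y - y₀ := by
      simp
    rw [e11] at e10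
    show ‖Z y 1 - Z y₀ 1‖ ≤ 2*M*‖y - y₀‖
    rw [show Z y 1 = w 1 from hend]
    exact e10
  -- continuity of g
  have hgcont : Continuous g := by
    rw [continuous_iff_continuousAt]
    intro y₀
    obtain ⟨ε, hεpos, hε⟩ := hglip y₀
    rw [Metric.continuousAt_iff]
    intro ε' hε'
    refine ⟨min ε (ε'/(2*M+1)), by positivity, fun {y} hy => ?_⟩
    have h1 := hε y (lt_of_lt_of_le hy (min_le_left _ _))
    have h2 : dist y y₀ < ε'/(2*M+1) := lt_of_lt_of_le hy (min_le_right _ _)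
    rw [dist_eq_norm] at h2 ⊢
    calc ‖g y - g y₀‖ ≤ 2*M*‖y - y₀‖ := h1
      _ ≤ (2*M+1)*‖y - y₀‖ := by nlinarith [norm_nonneg (y - y₀)]
      _ < (2*M+1)*(ε'/(2*M+1)) := mul_lt_mul_of_pos_left h2 (by positivity)
      _ = ε' := by field_simp
  -- injectivity
  have hleft : ∀ x, g (f x) = x := by
    have heq := (T2Space.isSeparatedMap f).eq_of_comp_eq
      (had_locinj hM hbound hcont hdf) (hgcont.comp hfcont) continuous_id
      (funext fun x => by simp [hright (f x)]) 0 (by simpa using hg0)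
    intro x
    exact congrFun heq x
  -- smoothness
  have hcdf : ContDiff ℝ 1 f := by
    rw [contDiff_one_iff_fderiv]
    exact ⟨fun x => (hdf x).differentiableAt,
      hcont.congr fun x => ((hdf x).fderiv).symm⟩
  refine ⟨g, hleft, hright, ?_⟩
  rw [contDiff_iff_contDiffAt]
  intro y₀
  have hfb : f (g y₀) = y₀ := hright y₀
  have hcdb : ContDiffAt ℝ 1 f (g y₀) := hcdf.contDiffAt
  have hstrict : HasStrictFDerivAt f (φ (g y₀) : X →L[ℝ] X) (g y₀) :=
    hcdb.hasStrictFDerivAt' (hdf (g y₀)) one_ne_zero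
  have hlinv : ContDiffAt ℝ 1 (hcdb.localInverse (hdf (g y₀)) one_ne_zero) (f (g y₀)) :=
    hcdb.to_localInverse (hdf (g y₀)) one_ne_zero
  have hlinv' : ContDiffAt ℝ 1 (hcdb.localInverse (hdf (g y₀)) one_ne_zero) y₀ := by
    rwa [hfb] at hlinv
  apply hlinv'.congr_of_eventuallyEq
  have hev : ∀ᶠ x in 𝓝 (g y₀), (hcdb.localInverse (hdf (g y₀)) one_ne_zero) (f x) = x :=
    hstrict.eventually_left_inverse
  have hgten : Tendsto g (𝓝 y₀) (𝓝 (g y₀)) := hgcont.continuousAt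
  have := hgten.eventually hev
  filter_upwards [this] with y hy
  rw [← hy, hright y]
end

section
/- Let X be a Banach space and let f : X → X be continuously (Fréchet) differentiable. Suppose that for every x ∈ X the derivative f'(x) is an invertible bounded linear operator and that there is a constant M > 0 such that ‖[f'(x)]⁻¹‖ ≤ M for all x ∈ X. Then f is surjective: for every y ∈ X there exists x ∈ X with f(x) = y. -/
open Filter Topology

/-- A simple form of Ekeland's variational principle for nonnegative continuous
functions on a Banach space. -/
theorem ekeland_aux {X : Type*} [NormedAddCommGroup X] [CompleteSpace X]
    (F : X → ℝ) (hF : Continuous F) (hF0 : ∀ x, 0 ≤ F x) {ε : ℝ} (hε : 0 < ε) :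
    ∃ u : X, ∀ z : X, F u ≤ F z + ε * ‖z - u‖ := by
  classical
  set P : X → X → Prop := fun q p => F q + ε * ‖q - p‖ ≤ F p with hP
  have hPrefl : ∀ p, P p p := by intro p; simp [hP]
  have hPtrans : ∀ a b c, P a b → P b c → P a c := by
    intro a b c h1 h2
    have htri : ‖a - c‖ ≤ ‖a - b‖ + ‖b - c‖ := norm_sub_le_norm_sub_add_norm_sub a b c
    simp only [hP] at h1 h2 ⊢
    nlinarith [htri]
  have hbdd : ∀ p : X, BddBelow (F '' {q | P q p}) :=
    fun p => ⟨0, by rintro a ⟨q, -, rfl⟩; exact hF0 q⟩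
  have key : ∀ (p : X) (n : ℕ), ∃ q, P q p ∧ F q ≤ sInf (F '' {q | P q p}) + (1/2)^n := by
    intro p n
    obtain ⟨a, ha, hlt⟩ := Real.lt_sInf_add_pos (s := F '' {q | P q p})
      ⟨F p, p, hPrefl p, rfl⟩ (pow_pos (by norm_num : (0:ℝ) < 1/2) n)
    obtain ⟨q, hq, rfl⟩ := ha
    exact ⟨q, hq, hlt.le⟩
  let x : ℕ → X := fun n => Nat.recAux (0 : X) (fun n p => (key p n).choose) n
  have hxsucc : ∀ n, x (n+1) = (key (x n) n).choose := fun n => rfl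
  have hstep : ∀ n, P (x (n+1)) (x n) ∧
      F (x (n+1)) ≤ sInf (F '' {q | P q (x n)}) + (1/2)^n := by
    intro n; rw [hxsucc]; exact (key (x n) n).choose_spec
  have hchain : ∀ n m, n ≤ m → P (x m) (x n) := by
    intro n m hnm
    induction m, hnm using Nat.le_induction with
    | base => exact hPrefl _
    | succ m hm ih => exact hPtrans _ _ _ (hstep m).1 ih
  have hanti : Antitone (fun n => F (x n)) := by
    intro n m hnm
    have := hchain n m hnm
    simp only [hP] at this
    nlinarith [norm_nonneg (x m - x n)]
  have hbddr : BddBelow (Set.range fun n => F (x n)) :=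
    ⟨0, by rintro a ⟨n, rfl⟩; exact hF0 _⟩
  set L : ℝ := ⨅ n, F (x n) with hL
  have htendL : Tendsto (fun n => F (x n)) atTop (𝓝 L) := tendsto_atTop_ciInf hanti hbddr
  have hLle : ∀ n, L ≤ F (x n) := fun n => ciInf_le hbddr n
  have hcauchy : CauchySeq x := by
    apply cauchySeq_of_le_tendsto_0 (fun N => (F (x N) - L) / ε)
    · intro n m N hn hm
      rcases le_total n m with hnm | hnm
      · have h1 := hchain n m hnm
        simp only [hP] at h1
        rw [dist_eq_norm, norm_sub_rev]
        rw [le_div_iff₀ hε, mul_comm]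
        have := hanti hn
        have := hLle m
        linarith
      · have h1 := hchain m n hnm
        simp only [hP] at h1
        rw [dist_eq_norm]
        rw [le_div_iff₀ hε, mul_comm]
        have := hanti hm
        have := hLle n
        linarith
    · have : Tendsto (fun N => (F (x N) - L) / ε) atTop (𝓝 ((L - L) / ε)) :=
        (htendL.sub_const L).div_const ε
      simpa using this
  obtain ⟨u, hu⟩ := cauchySeq_tendsto_of_complete hcauchy
  have hPu : ∀ n, P u (x n) := by
    intro n
    have htend : Tendsto (fun m => F (x m) + ε * ‖x m - x n‖) atTop
        (𝓝 (F u + ε * ‖u - x n‖)) :=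
      ((hF.tendsto u).comp hu).add
        ((tendsto_const_nhds).mul ((hu.sub tendsto_const_nhds).norm))
    exact le_of_tendsto htend (eventually_atTop.2 ⟨n, fun m hm => hchain n m hm⟩)
  refine ⟨u, ?_⟩
  intro z
  by_contra hcon
  push_neg at hcon
  have hPz : P z u := hcon.le
  have hFuz : F u ≤ F z := by
    have step : ∀ n, F u ≤ F z + (1/2)^n := by
      intro n
      have h1 : P z (x n) := hPtrans _ _ _ hPz (hPu n)
      have h2 : sInf (F '' {q | P q (x n)}) ≤ F z := csInf_le (hbdd _) ⟨z, h1, rfl⟩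
      have h3 := (hstep n).2
      have h4 := hPu (n+1)
      simp only [hP] at h4
      nlinarith [norm_nonneg (u - x (n+1))]
    refine le_of_forall_pos_le_add ?_
    intro δ hδ
    obtain ⟨n, hn⟩ := exists_pow_lt_of_lt_one hδ (by norm_num : (1:ℝ)/2 < 1)
    calc F u ≤ F z + (1/2)^n := step n
    _ ≤ F z + δ := by linarith
  have := mul_nonneg hε.le (norm_nonneg (z - u))
  linarith

/-- Under Hadamard's hypotheses, `f` is surjective. -/
theorem hadamard_surjective
    {X : Type*} [NormedAddCommGroup X] [NormedSpace ℝ X] [CompleteSpace X]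
    (f : X → X) (φ : X → X ≃L[ℝ] X) (M : ℝ) (hM : 0 < M)
    (hdf : ∀ x, HasFDerivAt f (φ x : X →L[ℝ] X) x)
    (hcont : Continuous fun x => (φ x : X →L[ℝ] X))
    (hbound : ∀ x, ‖((φ x).symm : X →L[ℝ] X)‖ ≤ M) :
    Function.Surjective f := by
  intro y
  have hfc : Continuous f := by
    have : ∀ x : X, ContinuousAt f x := fun x => (hdf x).continuousAt
    exact continuous_iff_continuousAt.2 this
  obtain ⟨u, hu⟩ := ekeland_aux (fun x => ‖f x - y‖)
    ((hfc.sub continuous_const).norm) (fun x => norm_nonneg _)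
    (show (0:ℝ) < 1/(2*M) by positivity)
  refine ⟨u, ?_⟩
  by_contra hne
  set r : ℝ := ‖f u - y‖ with hr
  have hrpos : 0 < r := by
    rw [hr, norm_pos_iff, sub_ne_zero]
    exact hne
  set h : X := (φ u).symm (y - f u) with hh
  have hφh : (φ u : X →L[ℝ] X) h = y - f u := (φ u).apply_symm_apply _
  have hhn : ‖h‖ ≤ M * r := by
    calc ‖h‖ ≤ ‖((φ u).symm : X →L[ℝ] X)‖ * ‖y - f u‖ :=
          ((φ u).symm : X →L[ℝ] X).le_opNorm _
    _ ≤ M * r := by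
        rw [norm_sub_rev]
        exact mul_le_mul_of_nonneg_right (hbound u) (norm_nonneg _)
  have hd := (hdf u).isLittleO
  have hcomp : Tendsto (fun t : ℝ => u + t • h) (𝓝[>] (0:ℝ)) (𝓝 u) := by
    have hc : Tendsto (fun t : ℝ => u + t • h) (𝓝 (0:ℝ)) (𝓝 (u + (0:ℝ) • h)) :=
      Continuous.tendsto (by continuity) 0
    simp only [zero_smul, add_zero] at hc
    exact hc.mono_left nhdsWithin_le_nhds
  have h2 := hd.comp_tendsto hcomp
  set c : ℝ := r / (4 * (M * r + 1)) with hc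
  have hcpos : 0 < c := by positivity
  have h3 := h2.def hcpos
  simp only [Function.comp] at h3
  have h4 : ∀ᶠ t : ℝ in 𝓝[>] (0:ℝ), t < 1 :=
    eventually_nhdsWithin_of_eventually_nhds
      (Filter.Tendsto.eventually_lt_const (by norm_num) tendsto_id)
  have h5 : ∀ᶠ t : ℝ in 𝓝[>] (0:ℝ), (0:ℝ) < t := eventually_mem_nhdsWithin
  obtain ⟨t, ⟨hb, ht1⟩, ht0⟩ := ((h3.and h4).and h5).exists
  -- unpack the little-o bound
  have herr : ‖f (u + t • h) - f u - t • (y - f u)‖ ≤ c * (t * ‖h‖) := by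
    have : (φ u : X →L[ℝ] X) (u + t • h - u) = t • (y - f u) := by
      rw [add_sub_cancel_left, map_smul, hφh]
    rw [this] at hb
    have hnorm : ‖u + t • h - u‖ = t * ‖h‖ := by
      rw [add_sub_cancel_left, norm_smul, Real.norm_eq_abs, abs_of_pos ht0]
    rwa [hnorm] at hb
  have hmain : ‖f (u + t • h) - y‖ ≤ (1 - t) * r + c * (t * ‖h‖) := by
    have hdecomp : f (u + t • h) - y =
        (f (u + t • h) - f u - t • (y - f u)) + (1 - t) • (f u - y) := by
      module
    calc ‖f (u + t • h) - y‖
        ≤ ‖f (u + t • h) - f u - t • (y - f u)‖ + ‖(1 - t) • (f u - y)‖ := by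
          rw [hdecomp]; exact norm_add_le _ _
    _ ≤ c * (t * ‖h‖) + (1 - t) * r := by
          rw [norm_smul, Real.norm_eq_abs, abs_of_pos (by linarith : (0:ℝ) < 1 - t)]
          exact add_le_add herr le_rfl
    _ = (1 - t) * r + c * (t * ‖h‖) := by ring
  have hek := hu (u + t • h)
  simp only [add_sub_cancel_left] at hek
  have hnorm : ‖t • h‖ = t * ‖h‖ := by
    rw [norm_smul, Real.norm_eq_abs, abs_of_pos ht0]
  rw [hnorm] at hek
  -- combine: r ≤ (1-t) r + c t ‖h‖ + (1/(2M)) t ‖h‖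
  have hth : t * ‖h‖ ≤ t * (M * r) := mul_le_mul_of_nonneg_left hhn ht0.le
  have hcb : c * (t * ‖h‖) ≤ t * r / 4 := by
    have h1 : c * (t * ‖h‖) ≤ c * (t * (M * r)) := mul_le_mul_of_nonneg_left hth hcpos.le
    have h2 : c * (t * (M * r)) ≤ t * r / 4 := by
      rw [hc]
      rw [div_mul_eq_mul_div, div_le_iff₀ (by positivity : (0:ℝ) < 4 * (M * r + 1))]
      nlinarith [ht0.le, hrpos.le, hM.le]
    linarith
  have hib : (1/(2*M)) * (t * ‖h‖) ≤ t * r / 2 := by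
    have h1 : (1/(2*M)) * (t * ‖h‖) ≤ (1/(2*M)) * (t * (M * r)) :=
      mul_le_mul_of_nonneg_left hth (by positivity)
    have h2 : (1/(2*M)) * (t * (M * r)) = t * r / 2 := by
      field_simp
    linarith
  have : r ≤ (1 - t) * r + t * r / 4 + t * r / 2 := by
    calc r ≤ ‖f (u + t • h) - y‖ + (1/(2*M)) * (t * ‖h‖) := hek
    _ ≤ (1 - t) * r + c * (t * ‖h‖) + t * r / 2 := by linarith
    _ ≤ (1 - t) * r + t * r / 4 + t * r / 2 := by linarith
  nlinarith [mul_pos ht0 hrpos]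
end

section
/- Let X be a Banach space and let f : X → X be continuously (Fréchet) differentiable. Suppose that for every x ∈ X the derivative f'(x) is an invertible bounded linear operator and that there is a constant M > 0 such that ‖[f'(x)]⁻¹‖ ≤ M for all x ∈ X. Then f is injective: if f(a) = f(b) for a, b ∈ X, then a = b. -/
open Set Filter Topology Metric Uniformity

section LiftLemma

variable {Y : Type*} [NormedAddCommGroup Y] [NormedSpace ℝ Y] [CompleteSpace Y]
variable {F : Y → Y} {Φ : Y → Y ≃L[ℝ] Y}

lemma hadamard_locInj (hF : ∀ y, HasStrictFDerivAt F (Φ y : Y →L[ℝ] Y) y) :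
    IsLocallyInjective F := by
  intro y
  refine ⟨((hF y).toOpenPartialHomeomorph F).source,
    ((hF y).toOpenPartialHomeomorph F).open_source,
    (hF y).mem_toOpenPartialHomeomorph_source, ?_⟩
  have h := ((hF y).toOpenPartialHomeomorph F).injOn
  rwa [(hF y).toOpenPartialHomeomorph_coe] at h

lemma hadamard_lift_unique (hF : ∀ y, HasStrictFDerivAt F (Φ y : Y →L[ℝ] Y) y)
    {q w : Y} {Γ₁ Γ₂ : ℝ → Y} {s : Set ℝ} (hs : IsPreconnected s)
    (h₁c : ContinuousOn Γ₁ s) (h₂c : ContinuousOn Γ₂ s)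
    (h₁v : ∀ u ∈ s, F (Γ₁ u) = q + u • w) (h₂v : ∀ u ∈ s, F (Γ₂ u) = q + u • w)
    {a : ℝ} (ha : a ∈ s) (haeq : Γ₁ a = Γ₂ a) : Set.EqOn Γ₁ Γ₂ s :=
  (T2Space.isSeparatedMap F).eqOn_of_comp_eqOn (hadamard_locInj hF) hs h₁c h₂c
    (fun u hu => by simp only [Function.comp_apply, h₁v u hu, h₂v u hu]) ha haeq

lemma hadamard_lift_hasDerivWithin (hF : ∀ y, HasStrictFDerivAt F (Φ y : Y →L[ℝ] Y) y)
    {q w : Y} {Γ : ℝ → Y} {s : Set ℝ} (hΓc : ContinuousOn Γ s)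
    (hΓF : ∀ u ∈ s, F (Γ u) = q + u • w) {u : ℝ} (hu : u ∈ s) :
    HasDerivWithinAt Γ ((Φ (Γ u)).symm w) s u := by
  set h := hF (Γ u) with hh
  set e := h.toOpenPartialHomeomorph F with he
  have hecoe : ∀ z, e z = F z := fun z => congrFun h.toOpenPartialHomeomorph_coe z
  have hsrc : Γ u ∈ e.source := h.mem_toOpenPartialHomeomorph_source
  have hinv : HasStrictFDerivAt (h.localInverse F (Φ (Γ u)) (Γ u))
      ((Φ (Γ u)).symm : Y →L[ℝ] Y) (F (Γ u)) := h.to_localInverse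
  have hp : HasDerivWithinAt (fun v : ℝ => q + v • w) w s u := by
    have := ((hasDerivAt_id u).smul_const w).const_add q
    simpa using this.hasDerivWithinAt
  have hp' : HasDerivWithinAt (fun v : ℝ => q + v • w) w s u := hp
  have hcomp : HasDerivWithinAt ((h.localInverse F (Φ (Γ u)) (Γ u)) ∘ fun v : ℝ => q + v • w)
      ((Φ (Γ u)).symm w) s u := by
    have hloc : HasFDerivAt (h.localInverse F (Φ (Γ u)) (Γ u))
        ((Φ (Γ u)).symm : Y →L[ℝ] Y) (q + u • w) := by
      rw [← hΓF u hu]; exact hinv.hasFDerivAt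
    exact hloc.comp_hasDerivWithinAt u hp
  have hev : Γ =ᶠ[𝓝[s] u] ((h.localInverse F (Φ (Γ u)) (Γ u)) ∘ fun v : ℝ => q + v • w) := by
    have h1 : ∀ᶠ v in 𝓝[s] u, Γ v ∈ e.source :=
      (hΓc u hu).eventually (e.open_source.eventually_mem hsrc)
    filter_upwards [h1, eventually_mem_nhdsWithin] with v hv hvs
    have : e (Γ v) = q + v • w := by rw [hecoe, hΓF v hvs]
    calc Γ v = e.symm (e (Γ v)) := (e.left_inv hv).symm
    _ = e.symm (q + v • w) := by rw [this]
    _ = _ := rfl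
  have hxeq : Γ u = ((h.localInverse F (Φ (Γ u)) (Γ u)) ∘ fun v : ℝ => q + v • w) u := by
    have : e (Γ u) = q + u • w := by rw [hecoe, hΓF u hu]
    calc Γ u = e.symm (e (Γ u)) := (e.left_inv hsrc).symm
    _ = e.symm (q + u • w) := by rw [this]
    _ = _ := rfl
  exact hcomp.congr_of_eventuallyEq hev hxeq

lemma hadamard_lift_lipschitz (hF : ∀ y, HasStrictFDerivAt F (Φ y : Y →L[ℝ] Y) y)
    {M : ℝ} (hb : ∀ y, ‖((Φ y).symm : Y →L[ℝ] Y)‖ ≤ M)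
    {q w : Y} {Γ : ℝ → Y} {s : Set ℝ} (hconv : Convex ℝ s) (hΓc : ContinuousOn Γ s)
    (hΓF : ∀ u ∈ s, F (Γ u) = q + u • w) {x y : ℝ} (hx : x ∈ s) (hy : y ∈ s) :
    ‖Γ y - Γ x‖ ≤ M * ‖w‖ * ‖y - x‖ := by
  refine Convex.norm_image_sub_le_of_norm_hasDerivWithin_le
    (f' := fun u => (Φ (Γ u)).symm w)
    (fun u hu => hadamard_lift_hasDerivWithin hF hΓc hΓF hu) (fun u hu => ?_) hconv hx hy
  exact (ContinuousLinearMap.le_opNorm _ w).trans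
    (mul_le_mul_of_nonneg_right (hb _) (norm_nonneg w))

lemma hadamard_lift_extend (hF : ∀ y, HasStrictFDerivAt F (Φ y : Y →L[ℝ] Y) y)
    {q w y₁ : Y} {s : ℝ} (hs1 : s ≤ 1)
    (hP : ∃ Γ : ℝ → Y, ContinuousOn Γ (Icc s 1) ∧ Γ 1 = y₁ ∧
      ∀ u ∈ Icc s 1, F (Γ u) = q + u • w) :
    ∃ s' < s, ∃ Γ : ℝ → Y, ContinuousOn Γ (Icc s' 1) ∧ Γ 1 = y₁ ∧
      ∀ u ∈ Icc s' 1, F (Γ u) = q + u • w := by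
  obtain ⟨Γ, hc, h1, hv⟩ := hP
  have hsmem : s ∈ Icc s 1 := ⟨le_rfl, hs1⟩
  set e := (hF (Γ s)).toOpenPartialHomeomorph F with he
  have hecoe : ∀ z, e z = F z := fun z => congrFun (hF (Γ s)).toOpenPartialHomeomorph_coe z
  have hsrc : Γ s ∈ e.source := (hF (Γ s)).mem_toOpenPartialHomeomorph_source
  have htgt : q + s • w ∈ e.target := by
    rw [← hv s hsmem, ← hecoe]; exact e.map_source hsrc
  obtain ⟨δ, hδ, hball⟩ : ∃ δ > 0, ∀ u ∈ ball s δ, q + u • w ∈ e.target := by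
    have hcont : Continuous fun u : ℝ => q + u • w :=
      continuous_const.add (continuous_id.smul continuous_const)
    have : (fun u : ℝ => q + u • w) ⁻¹' e.target ∈ 𝓝 s :=
      hcont.continuousAt.preimage_mem_nhds (e.open_target.mem_nhds htgt)
    obtain ⟨δ, hδ, hδball⟩ := Metric.mem_nhds_iff.mp this
    exact ⟨δ, hδ, fun u hu => hδball hu⟩
  set s' := s - δ/2 with hs'
  have hs's : s' < s := by simp [hs']; linarith
  refine ⟨s', hs's, fun u => if u < s then e.symm (q + u • w) else Γ u, ?_, ?_, ?_⟩
  · -- continuity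
    set Γn : ℝ → Y := fun u => if u < s then e.symm (q + u • w) else Γ u with hΓn
    have hA : EqOn Γn (fun u => e.symm (q + u • w)) (Icc s' s) := by
      intro u hu
      rcases lt_or_eq_of_le hu.2 with h | h
      · simp [hΓn, h]
      · subst h
        simp only [hΓn, lt_irrefl, if_false]
        rw [← hv u ⟨le_rfl, hs1⟩, ← hecoe, e.left_inv hsrc]
    have hB : EqOn Γn Γ (Icc s 1) := fun u hu => by simp [hΓn, not_lt.mpr hu.1]
    have hun : Icc s' 1 = Icc s' s ∪ Icc s 1 :=
      (Icc_union_Icc_eq_Icc (le_of_lt hs's) hs1).symm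
    rw [hun]
    intro x hx
    have hsub : Icc s' s ⊆ ball s δ := by
      intro v hv'
      rw [mem_ball, Real.dist_eq, abs_lt]
      simp [hs'] at hv'
      constructor <;> linarith [hv'.1, hv'.2]
    have c1 : ContinuousWithinAt Γn (Icc s' s) x := by
      by_cases hx1 : x ∈ Icc s' s
      · have hbase : ContinuousOn (fun u : ℝ => e.symm (q + u • w)) (Icc s' s) := by
          apply e.continuousOn_symm.comp
          · exact (continuous_const.add (continuous_id.smul continuous_const)).continuousOn
          · exact fun v hv' => hball _ (hsub hv')
        exact (hbase x hx1).congr hA (hA hx1)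
      · exact continuousWithinAt_of_notMem_closure (by rwa [isClosed_Icc.closure_eq])
    have c2 : ContinuousWithinAt Γn (Icc s 1) x := by
      by_cases hx2 : x ∈ Icc s 1
      · exact ((hc x hx2).congr hB (hB hx2))
      · exact continuousWithinAt_of_notMem_closure (by rwa [isClosed_Icc.closure_eq])
    exact c1.union c2
  · simp [not_lt.mpr hs1, h1]
  · intro u hu
    by_cases hus : u < s
    · simp only [if_pos hus]
      have humem : u ∈ ball s δ := by
        rw [mem_ball, Real.dist_eq, abs_lt]
        constructor <;> simp [hs'] at hu ⊢ <;> linarith [hu.1, hu.2]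
      rw [← hecoe, e.right_inv (hball u humem)]
    · simp only [if_neg hus]
      exact hv u ⟨not_lt.mp hus, hu.2⟩

lemma hadamard_lift_closure (hF : ∀ y, HasStrictFDerivAt F (Φ y : Y →L[ℝ] Y) y)
    {M : ℝ} (hM : 0 ≤ M) (hb : ∀ y, ‖((Φ y).symm : Y →L[ℝ] Y)‖ ≤ M)
    {q w y₁ : Y} {s₀ : ℝ} (hs₀ : s₀ < 1)
    (hP : ∀ s ∈ Ioc s₀ 1, ∃ Γ : ℝ → Y, ContinuousOn Γ (Icc s 1) ∧ Γ 1 = y₁ ∧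
      ∀ u ∈ Icc s 1, F (Γ u) = q + u • w) :
    ∃ Γ : ℝ → Y, ContinuousOn Γ (Icc s₀ 1) ∧ Γ 1 = y₁ ∧
      ∀ u ∈ Icc s₀ 1, F (Γ u) = q + u • w := by
  choose! L hLc hL1 hLv using hP
  set Γ : ℝ → Y := fun u => L u u with hΓ
  have factA : ∀ s ∈ Ioc s₀ 1, EqOn Γ (L s) (Icc s 1) := by
    intro s hs u hu
    have hu' : u ∈ Ioc s₀ 1 := ⟨lt_of_lt_of_le hs.1 hu.1, hu.2⟩
    have heq : EqOn (L u) (L s) (Icc u 1) := by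
      refine hadamard_lift_unique hF isPreconnected_Icc (hLc u hu')
        ((hLc s hs).mono (Icc_subset_Icc_left hu.1)) (hLv u hu')
        (fun v hv => hLv s hs v ⟨le_trans hu.1 hv.1, hv.2⟩)
        (a := 1) ⟨hu'.2, le_rfl⟩ ?_
      rw [hL1 u hu', hL1 s hs]
    exact heq ⟨le_rfl, hu'.2⟩
  have factB : ∀ u ∈ Ioc s₀ 1, F (Γ u) = q + u • w := fun u hu =>
    hLv u hu u ⟨le_rfl, hu.2⟩
  have factC : ContinuousOn Γ (Ioc s₀ 1) := by
    intro u hu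
    set s : ℝ := (s₀ + u) / 2 with hsdef
    have hs : s ∈ Ioc s₀ 1 := ⟨by simp [hsdef]; linarith [hu.1], by simp [hsdef]; linarith [hu.1, hu.2]⟩
    have hsu : s < u := by simp [hsdef]; linarith [hu.1]
    have h1 : ContinuousWithinAt Γ (Icc s 1) u := by
      refine ((hLc s hs) u ⟨hsu.le, hu.2⟩).congr (factA s hs) (factA s hs ⟨hsu.le, hu.2⟩)
    refine h1.mono_of_mem_nhdsWithin (mem_nhdsWithin.mpr ⟨Ioi s, isOpen_Ioi, hsu, ?_⟩)
    rintro v ⟨hv1, hv2⟩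
    exact ⟨le_of_lt hv1, hv2.2⟩
  have factD : ∀ x ∈ Ioc s₀ 1, ∀ y ∈ Ioc s₀ 1, ‖Γ y - Γ x‖ ≤ M * ‖w‖ * ‖y - x‖ := by
    intro x hx y hy
    set s : ℝ := min x y with hsdef
    have hs : s ∈ Ioc s₀ 1 := ⟨lt_min hx.1 hy.1, le_trans (min_le_left _ _) hx.2⟩
    have hxm : x ∈ Icc s 1 := ⟨min_le_left _ _, hx.2⟩
    have hym : y ∈ Icc s 1 := ⟨min_le_right _ _, hy.2⟩
    rw [factA s hs hxm, factA s hs hym]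
    exact hadamard_lift_lipschitz hF hb (convex_Icc s 1) (hLc s hs) (hLv s hs) hxm hym
  -- the approximating sequence
  set u : ℕ → ℝ := fun n => s₀ + (1 - s₀) / (n + 1) with hu
  have hpos : (0:ℝ) < 1 - s₀ := by linarith
  have hu_mem : ∀ n, u n ∈ Ioc s₀ 1 := by
    intro n
    have hn : (0:ℝ) < n + 1 := by positivity
    constructor
    · simp only [hu]; nlinarith [div_pos hpos hn]
    · have hle : (1 - s₀) / (n + 1) ≤ 1 - s₀ := by
        rw [div_le_iff₀ hn]; nlinarith
      simp only [hu]; linarith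
  have hu_anti : ∀ {m n : ℕ}, m ≤ n → u n ≤ u m := by
    intro m n hmn
    have h1 : (0:ℝ) < m + 1 := by positivity
    have h2 : (m:ℝ) + 1 ≤ n + 1 := by exact_mod_cast by omega
    simp only [hu, add_le_add_iff_left]
    exact div_le_div_of_nonneg_left hpos.le h1 h2
  have hu_tend : Tendsto u atTop (𝓝 s₀) := by
    have h0 : Tendsto (fun n : ℕ => (1 - s₀) / (n + 1)) atTop (𝓝 0) := by
      simpa [div_eq_mul_inv] using tendsto_one_div_add_atTop_nhds_zero_nat.const_mul (1 - s₀)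
    simpa using tendsto_const_nhds.add h0
  have hCauchy : CauchySeq (Γ ∘ u) := by
    refine cauchySeq_of_le_tendsto_0 (fun N => M * ‖w‖ * ((1 - s₀) / (N + 1))) ?_ ?_
    · intro n m N hn hm
      rw [Function.comp_apply, Function.comp_apply, dist_eq_norm]
      refine (factD (u m) (hu_mem m) (u n) (hu_mem n)).trans ?_
      refine mul_le_mul_of_nonneg_left ?_ (by positivity)
      rw [Real.norm_eq_abs, abs_le]
      have h1 := hu_anti hn
      have h2 := hu_anti hm
      have h3 := (hu_mem n).1
      have h4 := (hu_mem m).1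
      have h5 : u N - s₀ = (1 - s₀) / (N + 1) := by simp [hu]
      rw [← h5]
      constructor <;> linarith
    · have h0 : Tendsto (fun n : ℕ => (1 - s₀) / (n + 1)) atTop (𝓝 0) := by
        simpa [div_eq_mul_inv] using tendsto_one_div_add_atTop_nhds_zero_nat.const_mul (1 - s₀)
      simpa using h0.const_mul (M * ‖w‖)
  obtain ⟨y₀, hy₀⟩ := cauchySeq_tendsto_of_complete hCauchy
  have hFy₀ : F y₀ = q + s₀ • w := by
    have h1 : Tendsto (fun n => F (Γ (u n))) atTop (𝓝 (F y₀)) :=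
      ((hF y₀).continuousAt.tendsto).comp hy₀
    have h2 : (fun n => F (Γ (u n))) = fun n => q + u n • w :=
      funext fun n => factB (u n) (hu_mem n)
    have h3 : Tendsto (fun n => q + u n • w) atTop (𝓝 (q + s₀ • w)) :=
      ((continuous_const.add (continuous_id.smul continuous_const)).tendsto s₀).comp hu_tend
    rw [h2] at h1
    exact tendsto_nhds_unique h1 h3
  have hclose : ∀ v ∈ Ioc s₀ 1, ‖Γ v - y₀‖ ≤ M * ‖w‖ * (v - s₀) := by
    intro v hv
    have h1 : Tendsto (fun n => ‖Γ v - Γ (u n)‖) atTop (𝓝 ‖Γ v - y₀‖) :=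
      (tendsto_const_nhds.sub hy₀).norm
    have h2 : Tendsto (fun n => M * ‖w‖ * ‖v - u n‖) atTop (𝓝 (M * ‖w‖ * ‖v - s₀‖)) :=
      ((tendsto_const_nhds.sub hu_tend).norm).const_mul _
    have h3 : ‖Γ v - y₀‖ ≤ M * ‖w‖ * ‖v - s₀‖ :=
      le_of_tendsto_of_tendsto' h1 h2 fun n => factD (u n) (hu_mem n) v hv
    rwa [Real.norm_eq_abs, abs_of_nonneg (by linarith [hv.1])] at h3
  refine ⟨fun v => if v ≤ s₀ then y₀ else Γ v, ?_, ?_, ?_⟩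
  · -- continuity on Icc s₀ 1
    set ΓF : ℝ → Y := fun v => if v ≤ s₀ then y₀ else Γ v with hΓF
    have hEq : EqOn ΓF Γ (Ioc s₀ 1) := fun z hz => by simp [hΓF, not_le.mpr hz.1]
    intro v hv
    rcases eq_or_lt_of_le hv.1 with hveq | hvlt
    · -- v = s₀
      have hv0 : v = s₀ := hveq.symm
      subst hv0
      have hval : ΓF v = y₀ := by simp [hΓF]
      show Tendsto ΓF (𝓝[Icc v 1] v) (𝓝 (ΓF v))
      rw [hval]
      have hdistbd : ∀ z ∈ Icc v 1, dist (ΓF z) y₀ ≤ M * ‖w‖ * (z - v) := by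
        intro z hz
        by_cases hzle : z ≤ v
        · have hzv : z = v := le_antisymm hzle hz.1
          simp [hΓF, hzv]
        · rw [dist_eq_norm]
          have hzmem : z ∈ Ioc v 1 := ⟨not_le.mp hzle, hz.2⟩
          rw [hEq hzmem]
          exact hclose z hzmem
      rw [tendsto_iff_dist_tendsto_zero]
      refine squeeze_zero' (Eventually.of_forall fun z => dist_nonneg)
        (eventually_mem_nhdsWithin.mono fun z hz => hdistbd z hz) ?_
      have htd : Tendsto (fun z : ℝ => M * ‖w‖ * (z - v)) (𝓝[Icc v 1] v)
          (𝓝 (M * ‖w‖ * (v - v))) :=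
        ((continuous_const.mul (continuous_id.sub continuous_const)).tendsto v).mono_left
          nhdsWithin_le_nhds
      simpa using htd
    · -- s₀ < v
      have h1 : ContinuousWithinAt Γ (Ioc s₀ 1) v := factC v ⟨hvlt, hv.2⟩
      have h2 : ContinuousWithinAt ΓF (Ioc s₀ 1) v :=
        h1.congr hEq (hEq ⟨hvlt, hv.2⟩)
      refine h2.mono_of_mem_nhdsWithin (mem_nhdsWithin.mpr ⟨Ioi s₀, isOpen_Ioi, hvlt, ?_⟩)
      rintro z ⟨hz1, hz2⟩
      exact ⟨hz1, hz2.2⟩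
  · have h1mem : (1:ℝ) ∈ Ioc s₀ 1 := ⟨hs₀, le_rfl⟩
    simp only [if_neg (not_le.mpr hs₀)]
    exact hL1 1 h1mem
  · intro v hv
    by_cases hvle : v ≤ s₀
    · have hveq : v = s₀ := le_antisymm hvle hv.1
      subst hveq
      simp only [le_refl, if_true]
      exact hFy₀
    · simp only [if_neg hvle]
      exact factB v ⟨not_le.mp hvle, hv.2⟩
theorem hadamard_lift_affine (hF : ∀ y, HasStrictFDerivAt F (Φ y : Y →L[ℝ] Y) y)
    {M : ℝ} (hM : 0 ≤ M) (hb : ∀ y, ‖((Φ y).symm : Y →L[ℝ] Y)‖ ≤ M)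
    (q w y₁ : Y) (h1 : F y₁ = q + (1:ℝ) • w) :
    ∃ Γ : ℝ → Y, ContinuousOn Γ (Icc 0 1) ∧ Γ 1 = y₁ ∧
      ∀ u ∈ Icc (0:ℝ) 1, F (Γ u) = q + u • w := by
  set P : ℝ → Prop := fun s => ∃ Γ : ℝ → Y, ContinuousOn Γ (Icc s 1) ∧ Γ 1 = y₁ ∧
      ∀ u ∈ Icc s 1, F (Γ u) = q + u • w with hP
  have hmono : ∀ s s' : ℝ, s ≤ s' → P s → P s' := by
    rintro s s' hss ⟨Γ, hc, h1', hv⟩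
    exact ⟨Γ, hc.mono (Icc_subset_Icc_left hss), h1',
      fun u hu => hv u ⟨le_trans hss hu.1, hu.2⟩⟩
  have hP1 : P 1 := by
    refine ⟨fun _ => y₁, continuousOn_const, rfl, fun u hu => ?_⟩
    have : u = 1 := le_antisymm hu.2 hu.1
    rw [this, h1]
  set S : Set ℝ := {s | 0 ≤ s ∧ P s} with hS
  have h1S : (1:ℝ) ∈ S := ⟨zero_le_one, hP1⟩
  have hbdd : BddBelow S := ⟨0, fun s hs => hs.1⟩
  set T := sInf S with hT
  have hT0 : 0 ≤ T := le_csInf ⟨1, h1S⟩ fun s hs => hs.1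
  have hT1 : T ≤ 1 := csInf_le hbdd h1S
  have hT_upper : ∀ s, T < s → s ≤ 1 → P s := by
    intro s hTs hs1
    obtain ⟨s', hs'S, hs's⟩ := exists_lt_of_csInf_lt ⟨1, h1S⟩ hTs
    exact hmono s' s hs's.le hs'S.2
  have hPT : P T := by
    rcases eq_or_lt_of_le hT1 with hTeq | hTlt
    · rw [hTeq]; exact hP1
    · exact hadamard_lift_closure hF hM hb hTlt fun s hs => hT_upper s hs.1 hs.2
  have hT_zero : T ≤ 0 := by
    by_contra hTpos
    push_neg at hTpos
    obtain ⟨s', hs'T, hPs'⟩ := hadamard_lift_extend hF hT1 hPT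
    have hmax : max s' 0 ∈ S := ⟨le_max_right _ _, hmono s' _ (le_max_left _ _) hPs'⟩
    have : T ≤ max s' 0 := csInf_le hbdd hmax
    have : max s' 0 < T := max_lt hs'T hTpos
    linarith
  have : T = 0 := le_antisymm hT_zero hT0
  rw [this] at hPT
  exact hPT

end LiftLemma

section HadamardMain

variable {X : Type*} [NormedAddCommGroup X] [NormedSpace ℝ X] [CompleteSpace X]

/-- Uniform continuity near a compact set. -/
lemma hadamard_unif {E : Type*} [NormedAddCommGroup E] {φ : X → E} (hφ : Continuous φ)
    {K : Set X} (hK : IsCompact K) {ε : ℝ} (hε : 0 < ε) :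
    ∃ δ > 0, ∀ x ∈ K, ∀ y : X, dist y x < δ → ‖φ y - φ x‖ < ε := by
  have hr : {q : E × E | dist q.1 q.2 < ε} ∈ 𝓤 E := dist_mem_uniformity hε
  have hu := hK.uniformContinuousAt_of_continuousAt φ (fun a _ => hφ.continuousAt) hr
  rw [Metric.mem_uniformity_dist] at hu
  obtain ⟨δ, hδ, h⟩ := hu
  refine ⟨δ, hδ, fun x hx y hxy => ?_⟩
  have h2 := h (a := x) (b := y) (by rwa [dist_comm] at hxy) hx
  simp only [Set.mem_setOf_eq] at h2
  rw [dist_eq_norm, norm_sub_rev] at h2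
  exact h2

/-- The composition operator `h ↦ (t ↦ A (γ t) (h t))` as a continuous linear map. -/
noncomputable def hadamardCompCLM (φop : X → X →L[ℝ] X) (hφ : Continuous φop)
    (γ : C(Set.Icc (0:ℝ) 1, X)) :
    C(Set.Icc (0:ℝ) 1, X) →L[ℝ] C(Set.Icc (0:ℝ) 1, X) :=
  LinearMap.mkContinuous
    { toFun := fun h => ⟨fun t => φop (γ t) (h t), (hφ.comp γ.continuous).clm_apply h.continuous⟩
      map_add' := fun h₁ h₂ => by ext t; simp
      map_smul' := fun r h => by ext t; simp }
    ‖(⟨fun t => φop (γ t), hφ.comp γ.continuous⟩ : C(Set.Icc (0:ℝ) 1, X →L[ℝ] X))‖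
    (by
      intro h
      rw [ContinuousMap.norm_le _ (by positivity)]
      intro t
      calc ‖φop (γ t) (h t)‖ ≤ ‖φop (γ t)‖ * ‖h t‖ := ContinuousLinearMap.le_opNorm _ _
      _ ≤ ‖(⟨fun t => φop (γ t), hφ.comp γ.continuous⟩ :
            C(Set.Icc (0:ℝ) 1, X →L[ℝ] X))‖ * ‖h‖ := by
          gcongr
          · exact ContinuousMap.norm_coe_le_norm
              (⟨fun t => φop (γ t), hφ.comp γ.continuous⟩ : C(Set.Icc (0:ℝ) 1, X →L[ℝ] X)) t
          · exact ContinuousMap.norm_coe_le_norm h t)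

@[simp] lemma hadamardCompCLM_apply (φop : X → X →L[ℝ] X) (hφ : Continuous φop)
    (γ h : C(Set.Icc (0:ℝ) 1, X)) (t : Set.Icc (0:ℝ) 1) :
    hadamardCompCLM φop hφ γ h t = φop (γ t) (h t) := rfl

lemma hadamardCompCLM_norm_le (φop : X → X →L[ℝ] X) (hφ : Continuous φop)
    (γ : C(Set.Icc (0:ℝ) 1, X)) {M : ℝ} (hM : 0 ≤ M) (hb : ∀ x, ‖φop x‖ ≤ M) :
    ‖hadamardCompCLM φop hφ γ‖ ≤ M := by
  refine ContinuousLinearMap.opNorm_le_bound _ hM fun h => ?_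
  rw [ContinuousMap.norm_le _ (by positivity)]
  intro t
  calc ‖φop (γ t) (h t)‖ ≤ ‖φop (γ t)‖ * ‖h t‖ := ContinuousLinearMap.le_opNorm _ _
  _ ≤ M * ‖h‖ :=
      mul_le_mul (hb _) (ContinuousMap.norm_coe_le_norm h t) (norm_nonneg _) hM

/-- The composition operator as a continuous linear equivalence. -/
noncomputable def hadamardCompEquiv (φ : X → X ≃L[ℝ] X)
    (hc : Continuous fun x => (φ x : X →L[ℝ] X))
    (hc' : Continuous fun x => ((φ x).symm : X →L[ℝ] X))
    (γ : C(Set.Icc (0:ℝ) 1, X)) :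
    C(Set.Icc (0:ℝ) 1, X) ≃L[ℝ] C(Set.Icc (0:ℝ) 1, X) :=
  ContinuousLinearEquiv.equivOfInverse
    (hadamardCompCLM (fun x => (φ x : X →L[ℝ] X)) hc γ)
    (hadamardCompCLM (fun x => ((φ x).symm : X →L[ℝ] X)) hc' γ)
    (fun h => by ext t; exact (φ (γ t)).symm_apply_apply _)
    (fun h => by ext t; exact (φ (γ t)).apply_symm_apply _)

lemma hadamardCompEquiv_coe (φ : X → X ≃L[ℝ] X)
    (hc : Continuous fun x => (φ x : X →L[ℝ] X))
    (hc' : Continuous fun x => ((φ x).symm : X →L[ℝ] X))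
    (γ : C(Set.Icc (0:ℝ) 1, X)) :
    (hadamardCompEquiv φ hc hc' γ :
        C(Set.Icc (0:ℝ) 1, X) →L[ℝ] C(Set.Icc (0:ℝ) 1, X)) =
      hadamardCompCLM (fun x => (φ x : X →L[ℝ] X)) hc γ := rfl

lemma hadamardCompEquiv_symm_coe (φ : X → X ≃L[ℝ] X)
    (hc : Continuous fun x => (φ x : X →L[ℝ] X))
    (hc' : Continuous fun x => ((φ x).symm : X →L[ℝ] X))
    (γ : C(Set.Icc (0:ℝ) 1, X)) :
    ((hadamardCompEquiv φ hc hc' γ).symm :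
        C(Set.Icc (0:ℝ) 1, X) →L[ℝ] C(Set.Icc (0:ℝ) 1, X)) =
      hadamardCompCLM (fun x => ((φ x).symm : X →L[ℝ] X)) hc' γ := rfl

/-- The composition map `γ ↦ f ∘ γ`. -/
noncomputable def hadamardCompF (f : X → X) (hfc : Continuous f)
    (γ : C(Set.Icc (0:ℝ) 1, X)) : C(Set.Icc (0:ℝ) 1, X) :=
  ⟨fun t => f (γ t), hfc.comp γ.continuous⟩

lemma hadamard_hasStrictFDerivAt (f : X → X) (φ : X → X ≃L[ℝ] X)
    (hdf : ∀ x, HasFDerivAt f (φ x : X →L[ℝ] X) x)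
    (hcont : Continuous fun x => (φ x : X →L[ℝ] X)) (hfc : Continuous f)
    (γ : C(Set.Icc (0:ℝ) 1, X)) :
    HasStrictFDerivAt (hadamardCompF f hfc)
      (hadamardCompCLM (fun x => (φ x : X →L[ℝ] X)) hcont γ) γ := by
  rw [hasStrictFDerivAt_iff_isLittleO, Asymptotics.isLittleO_iff]
  intro c hc
  obtain ⟨δ, hδ, hKδ⟩ := hadamard_unif hcont (isCompact_range γ.continuous) hc
  have h1 : ∀ᶠ p : C(Set.Icc (0:ℝ) 1, X) × C(Set.Icc (0:ℝ) 1, X) in 𝓝 (γ, γ),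
      p.1 ∈ ball γ (δ/2) :=
    continuousAt_fst.eventually_mem (ball_mem_nhds _ (by positivity))
  have h2 : ∀ᶠ p : C(Set.Icc (0:ℝ) 1, X) × C(Set.Icc (0:ℝ) 1, X) in 𝓝 (γ, γ),
      p.2 ∈ ball γ (δ/2) :=
    continuousAt_snd.eventually_mem (ball_mem_nhds _ (by positivity))
  filter_upwards [h1, h2] with p hp1 hp2
  rw [ContinuousMap.norm_le _ (by positivity)]
  intro t
  have hmemball : ∀ (g : C(Set.Icc (0:ℝ) 1, X)), g ∈ ball γ (δ/2) → g t ∈ ball (γ t) δ := by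
    intro g hg
    rw [mem_ball] at hg ⊢
    calc dist (g t) (γ t) = ‖(g - γ) t‖ := by
          rw [ContinuousMap.sub_apply, dist_eq_norm]
    _ ≤ ‖g - γ‖ := ContinuousMap.norm_coe_le_norm _ t
    _ = dist g γ := (dist_eq_norm g γ).symm
    _ < δ/2 := hg
    _ < δ := by linarith
  have hu : p.1 t ∈ ball (γ t) δ := hmemball _ hp1
  have hv : p.2 t ∈ ball (γ t) δ := hmemball _ hp2
  have hmvt : ‖(fun z => f z - (φ (γ t) : X →L[ℝ] X) z) (p.1 t) -
      (fun z => f z - (φ (γ t) : X →L[ℝ] X) z) (p.2 t)‖ ≤ c * ‖p.1 t - p.2 t‖ := by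
    refine Convex.norm_image_sub_le_of_norm_hasFDerivWithin_le
      (f' := fun z => (φ z : X →L[ℝ] X) - (φ (γ t) : X →L[ℝ] X))
      (fun z _ => ((hdf z).sub ((φ (γ t) : X →L[ℝ] X).hasFDerivAt)).hasFDerivWithinAt)
      (fun z hz => (hKδ (γ t) (mem_range_self t) z (mem_ball.mp hz)).le)
      (convex_ball _ _) hv hu
  have hpt : (hadamardCompF f hfc p.1 - hadamardCompF f hfc p.2 -
      hadamardCompCLM (fun x => (φ x : X →L[ℝ] X)) hcont γ (p.1 - p.2)) t =
      f (p.1 t) - f (p.2 t) - (φ (γ t) : X →L[ℝ] X) (p.1 t - p.2 t) := by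
    simp [hadamardCompF, hadamardCompCLM_apply]
  rw [hpt]
  have : f (p.1 t) - f (p.2 t) - (φ (γ t) : X →L[ℝ] X) (p.1 t - p.2 t) =
      (fun z => f z - (φ (γ t) : X →L[ℝ] X) z) (p.1 t) -
      (fun z => f z - (φ (γ t) : X →L[ℝ] X) z) (p.2 t) := by
    simp only [map_sub]
    abel
  rw [this]
  refine hmvt.trans ?_
  refine mul_le_mul_of_nonneg_left ?_ hc.le
  calc ‖p.1 t - p.2 t‖ = ‖(p.1 - p.2) t‖ := by rw [ContinuousMap.sub_apply]
  _ ≤ ‖p.1 - p.2‖ := ContinuousMap.norm_coe_le_norm _ t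

end HadamardMain

/-- Under Hadamard's hypotheses, `f` is injective. -/
theorem hadamard_injective
    {X : Type*} [NormedAddCommGroup X] [NormedSpace ℝ X] [CompleteSpace X]
    (f : X → X) (φ : X → X ≃L[ℝ] X) (M : ℝ) (hM : 0 < M)
    (hdf : ∀ x, HasFDerivAt f (φ x : X →L[ℝ] X) x)
    (hcont : Continuous fun x => (φ x : X →L[ℝ] X))
    (hbound : ∀ x, ‖((φ x).symm : X →L[ℝ] X)‖ ≤ M) :
    Function.Injective f := by
  have hfc : Continuous f := continuous_iff_continuousAt.2 fun x => (hdf x).continuousAt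
  have hsf : ∀ x, HasStrictFDerivAt f (φ x : X →L[ℝ] X) x := fun x =>
    hasStrictFDerivAt_of_hasFDerivAt_of_continuousAt (Eventually.of_forall hdf)
      hcont.continuousAt
  -- continuity of the inverse family
  have hsymmc : Continuous fun x => ((φ x).symm : X →L[ℝ] X) := by
    have heq : ∀ x, ((φ x).symm : X →L[ℝ] X) = Ring.inverse ((φ x : X →L[ℝ] X)) := fun x => by
      rw [ContinuousLinearMap.ringInverse_eq_inverse, ContinuousLinearMap.inverse_equiv]
    have hcont' : Continuous fun x => Ring.inverse ((φ x : X →L[ℝ] X)) := by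
      refine continuous_iff_continuousAt.2 fun x => ?_
      have hca := NormedRing.inverse_continuousAt ((φ x).toUnit)
      have hcoe : ((φ x).toUnit : X →L[ℝ] X) = (φ x : X →L[ℝ] X) := rfl
      rw [hcoe] at hca
      exact ContinuousAt.comp (g := Ring.inverse)
        (f := fun y => ((φ y : X →L[ℝ] X))) (x := x) hca hcont.continuousAt
    exact hcont'.congr fun x => (heq x).symm
  intro a b hab
  -- the composition framework on C(Icc 0 1, X)
  have hF : ∀ γ : C(Set.Icc (0:ℝ) 1, X), HasStrictFDerivAt (hadamardCompF f hfc)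
      ((hadamardCompEquiv φ hcont hsymmc γ :
        C(Set.Icc (0:ℝ) 1, X) →L[ℝ] C(Set.Icc (0:ℝ) 1, X))) γ := fun γ => by
    rw [hadamardCompEquiv_coe]
    exact hadamard_hasStrictFDerivAt f φ hdf hcont hfc γ
  have hb : ∀ γ : C(Set.Icc (0:ℝ) 1, X),
      ‖((hadamardCompEquiv φ hcont hsymmc γ).symm :
        C(Set.Icc (0:ℝ) 1, X) →L[ℝ] C(Set.Icc (0:ℝ) 1, X))‖ ≤ M := fun γ => by
    rw [hadamardCompEquiv_symm_coe]
    exact hadamardCompCLM_norm_le _ hsymmc γ hM.le hbound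
  -- the loop based at f a = f b
  set t0 : Set.Icc (0:ℝ) 1 := ⟨0, by norm_num⟩ with ht0
  set t1 : Set.Icc (0:ℝ) 1 := ⟨1, by norm_num⟩ with ht1
  set σ : C(Set.Icc (0:ℝ) 1, X) := ⟨fun t => a + (t : ℝ) • (b - a),
    continuous_const.add (continuous_subtype_val.smul continuous_const)⟩ with hσ
  set q : C(Set.Icc (0:ℝ) 1, X) := ContinuousMap.const _ (f a) with hq
  set w : C(Set.Icc (0:ℝ) 1, X) := hadamardCompF f hfc σ - q with hw
  have h1 : hadamardCompF f hfc σ = q + (1:ℝ) • w := by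
    rw [hw, one_smul, add_sub_cancel]
  obtain ⟨Γ, hΓc, hΓ1, hΓv⟩ := hadamard_lift_affine hF hM.le hb q w σ h1
  have hsep : IsSeparatedMap f := T2Space.isSeparatedMap f
  have hinj : IsLocallyInjective f := hadamard_locInj hsf
  -- pointwise values of the lift
  have hval : ∀ s ∈ Icc (0:ℝ) 1, ∀ t : Set.Icc (0:ℝ) 1,
      f (Γ s t) = f a + s • (f (σ t) - f a) := by
    intro s hs t
    have := congrArg (fun g : C(Set.Icc (0:ℝ) 1, X) => g t) (hΓv s hs)
    simpa [hadamardCompF, hq, hw] using this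
  have hσ0 : σ t0 = a := by simp [hσ, ht0]
  have hσ1 : σ t1 = b := by simp [hσ, ht1]
  -- endpoint values of σ under f are both f a
  have hfσ0 : f (σ t0) = f a := by rw [hσ0]
  have hfσ1 : f (σ t1) = f a := by rw [hσ1, hab]
  -- evaluation paths are constant in s
  have heval : ∀ t : Set.Icc (0:ℝ) 1, f (σ t) = f a → Γ 1 t = Γ 0 t := by
    intro t ht
    refine hsep.constOn_of_comp hinj isPreconnected_Icc
      (g := fun s => Γ s t) ?_ ?_ (right_mem_Icc.mpr zero_le_one) (left_mem_Icc.mpr zero_le_one)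
    · exact (continuous_eval_const t).comp_continuousOn hΓc
    · intro s hs s' hs'
      rw [hval s hs t, hval s' hs' t, ht]
      simp
  have hb' : b = Γ 0 t1 := by
    have := heval t1 hfσ1
    rw [hΓ1, hσ1] at this
    exact this
  have ha' : a = Γ 0 t0 := by
    have := heval t0 hfσ0
    rw [hΓ1, hσ0] at this
    exact this
  -- Γ 0 is a lift of the constant loop, hence constant
  have hconst : Γ 0 t0 = Γ 0 t1 := by
    refine hsep.const_of_comp hinj (g := fun t => Γ 0 t) ?_ ?_ t0 t1
    · exact (Γ 0).continuous
    · intro t t'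
      rw [hval 0 (left_mem_Icc.mpr zero_le_one) t, hval 0 (left_mem_Icc.mpr zero_le_one) t']
      simp
  rw [ha', hb', hconst]
end

section
/- Let X be a Banach space and let f : X → X be continuously (Fréchet) differentiable with f'(x) invertible for all x ∈ X and ‖[f'(x)]⁻¹‖ ≤ M for all x ∈ X, for some M > 0. Let K ⊆ X be a compact set. Then f has a continuous right inverse on K: there exists a continuous map g : K → X such that f(g(y)) = y for all y ∈ K. -/
open Set Metric Filter Topology
open scoped NNReal

namespace HadamardAux

variable {X : Type*} [NormedAddCommGroup X] [NormedSpace ℝ X] [CompleteSpace X]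
variable {f : X → X} {φ : X → X ≃L[ℝ] X} {M : ℝ}

theorem approx_at (hcont : Continuous fun x => (φ x : X →L[ℝ] X))
    (hdf : ∀ x, HasFDerivAt f (φ x : X →L[ℝ] X) x)
    {ε : ℝ} (hε : 0 < ε) (a : X) :
    ∃ r > 0, ∀ z ∈ closedBall a r,
      ApproximatesLinearOn f (φ z : X →L[ℝ] X) (closedBall z r) (Real.toNNReal ε) := by
  obtain ⟨r0, hr0, hball⟩ : ∃ r0 > 0, ∀ w, dist w a < r0 →
      ‖(φ w : X →L[ℝ] X) - (φ a : X →L[ℝ] X)‖ < ε / 2 := by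
    obtain ⟨δ, hδ, h⟩ := Metric.continuous_iff.mp hcont a (ε / 2) (half_pos hε)
    exact ⟨δ, hδ, fun w hw => by simpa [dist_eq_norm] using h w hw⟩
  refine ⟨r0 / 3, by linarith, fun z hz => ?_⟩
  intro u hu v hv
  rw [Real.coe_toNNReal _ hε.le]
  have key : ∀ w ∈ closedBall z (r0 / 3), ‖(φ w : X →L[ℝ] X) - (φ z : X →L[ℝ] X)‖ ≤ ε := by
    intro w hw
    have h1 : dist w z ≤ r0 / 3 := mem_closedBall.mp hw
    have h2 : dist z a ≤ r0 / 3 := mem_closedBall.mp hz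
    have hwa : dist w a < r0 :=
      calc dist w a ≤ dist w z + dist z a := dist_triangle _ _ _
        _ < r0 := by linarith
    have hza : dist z a < r0 := by linarith
    have e1 := hball w hwa
    have e2 := hball z hza
    have hsplit : (φ w : X →L[ℝ] X) - (φ z : X →L[ℝ] X) =
        ((φ w : X →L[ℝ] X) - (φ a : X →L[ℝ] X)) - ((φ z : X →L[ℝ] X) - (φ a : X →L[ℝ] X)) := by
      abel
    calc ‖(φ w : X →L[ℝ] X) - (φ z : X →L[ℝ] X)‖
        ≤ ‖(φ w : X →L[ℝ] X) - (φ a : X →L[ℝ] X)‖ + ‖(φ z : X →L[ℝ] X) - (φ a : X →L[ℝ] X)‖ := by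
          rw [hsplit]; exact norm_sub_le _ _
      _ ≤ ε := by linarith
  exact (convex_closedBall z (r0 / 3)).norm_image_sub_le_of_norm_hasFDerivWithin_le'
    (fun w _ => (hdf w).hasFDerivWithinAt) key hv hu

theorem antilip (hM : 0 < M) (hbound : ∀ x, ‖((φ x).symm : X →L[ℝ] X)‖ ≤ M)
    {z : X} {s : Set X}
    (h : ApproximatesLinearOn f (φ z : X →L[ℝ] X) s (Real.toNNReal (2 * M)⁻¹))
    {u v : X} (hu : u ∈ s) (hv : v ∈ s) : ‖u - v‖ ≤ 2 * M * ‖f u - f v‖ := by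
  have key := h u hu v hv
  rw [Real.coe_toNNReal _ (by positivity)] at key
  have h2 : ‖u - v‖ ≤ M * ‖(φ z : X →L[ℝ] X) (u - v)‖ := by
    have e1 : u - v = ((φ z).symm : X →L[ℝ] X) ((φ z : X →L[ℝ] X) (u - v)) := by simp
    calc ‖u - v‖ = ‖((φ z).symm : X →L[ℝ] X) ((φ z : X →L[ℝ] X) (u - v))‖ := by rw [← e1]
      _ ≤ ‖((φ z).symm : X →L[ℝ] X)‖ * ‖(φ z : X →L[ℝ] X) (u - v)‖ :=
          ContinuousLinearMap.le_opNorm _ _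
      _ ≤ M * ‖(φ z : X →L[ℝ] X) (u - v)‖ :=
          mul_le_mul_of_nonneg_right (hbound z) (norm_nonneg _)
  have h3 : ‖(φ z : X →L[ℝ] X) (u - v)‖ ≤ ‖f u - f v‖ + (2 * M)⁻¹ * ‖u - v‖ := by
    have hrw : (φ z : X →L[ℝ] X) (u - v) =
        (f u - f v) - (f u - f v - (φ z : X →L[ℝ] X) (u - v)) := by abel
    rw [hrw]
    exact (norm_sub_le _ _).trans (by linarith)
  have hhalf : M * (2 * M)⁻¹ = 1 / 2 := by field_simp
  have h4 : M * ‖(φ z : X →L[ℝ] X) (u - v)‖ ≤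
      M * (‖f u - f v‖ + (2 * M)⁻¹ * ‖u - v‖) := by gcongr
  have h5 : M * (‖f u - f v‖ + (2 * M)⁻¹ * ‖u - v‖)
      = M * ‖f u - f v‖ + (1 / 2) * ‖u - v‖ := by
    rw [mul_add, ← mul_assoc, hhalf]
  nlinarith [norm_nonneg (u - v)]

theorem surj_near (hM : 0 < M) (hbound : ∀ x, ‖((φ x).symm : X →L[ℝ] X)‖ ≤ M)
    {z : X} {r : ℝ} (hr : 0 < r)
    (h : ApproximatesLinearOn f (φ z : X →L[ℝ] X) (closedBall z r) (Real.toNNReal (2 * M)⁻¹))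
    {y : X} (hy : ‖y - f z‖ ≤ r / (2 * M)) :
    ∃ u, ‖u - z‖ ≤ 2 * M * ‖y - f z‖ ∧ f u = y := by
  rcases subsingleton_or_nontrivial X with hX | hX
  · refine ⟨z, ?_, Subsingleton.elim _ _⟩
    simp only [sub_self, norm_zero]
    positivity
  have hyz : 0 ≤ ‖y - f z‖ := norm_nonneg _
  have hε0 : (0:ℝ) ≤ 2 * M * ‖y - f z‖ := by positivity
  have hεr : 2 * M * ‖y - f z‖ ≤ r := by
    calc 2 * M * ‖y - f z‖ ≤ 2 * M * (r / (2 * M)) := by gcongr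
      _ = r := by field_simp
  set fsymm := (φ z).toNonlinearRightInverse with hfsymm
  have hnn : (fsymm.nnnorm : ℝ) = ‖((φ z).symm : X →L[ℝ] X)‖ := rfl
  have hNpos : 0 < ‖((φ z).symm : X →L[ℝ] X)‖ := by
    obtain ⟨v0, hv0⟩ := exists_ne (0 : X)
    have hne : ((φ z).symm : X →L[ℝ] X) ≠ 0 := by
      intro h0
      apply hv0
      have h1 := congrArg (fun T : X →L[ℝ] X => T ((φ z) v0)) h0
      simpa using h1
    exact norm_pos_iff.mpr hne
  have hc : ((Real.toNNReal (2 * M)⁻¹ : ℝ≥0) : ℝ) = (2 * M)⁻¹ :=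
    Real.coe_toNNReal _ (by positivity)
  have key : (2 * M)⁻¹ ≤ (fsymm.nnnorm : ℝ)⁻¹ - ((Real.toNNReal (2 * M)⁻¹ : ℝ≥0) : ℝ) := by
    rw [hc, hnn]
    have h1 : ‖((φ z).symm : X →L[ℝ] X)‖ ≤ M := hbound z
    have h2 : M⁻¹ ≤ ‖((φ z).symm : X →L[ℝ] X)‖⁻¹ := by gcongr
    have h3 : (2 * M)⁻¹ + (2 * M)⁻¹ = M⁻¹ := by rw [mul_inv]; ring
    linarith
  have hymem : y ∈ closedBall (f z)
      (((fsymm.nnnorm : ℝ)⁻¹ - ((Real.toNNReal (2 * M)⁻¹ : ℝ≥0) : ℝ)) * (2 * M * ‖y - f z‖)) := by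
    rw [mem_closedBall, dist_eq_norm]
    have hM0 : M ≠ 0 := ne_of_gt hM
    have h1 : (2 * M)⁻¹ * (2 * M * ‖y - f z‖) = ‖y - f z‖ := by
      field_simp
    calc ‖y - f z‖ = (2 * M)⁻¹ * (2 * M * ‖y - f z‖) := h1.symm
      _ ≤ ((fsymm.nnnorm : ℝ)⁻¹ - ((Real.toNNReal (2 * M)⁻¹ : ℝ≥0) : ℝ)) * (2 * M * ‖y - f z‖) :=
          mul_le_mul_of_nonneg_right key hε0
  obtain ⟨u, hu, hfu⟩ := h.surjOn_closedBall_of_nonlinearRightInverse fsymm hε0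
    (closedBall_subset_closedBall hεr) hymem
  exact ⟨u, by simpa [dist_eq_norm] using mem_closedBall.mp hu, hfu⟩

theorem loc_inj (hM : 0 < M) (hcont : Continuous fun x => (φ x : X →L[ℝ] X))
    (hdf : ∀ x, HasFDerivAt f (φ x : X →L[ℝ] X) x)
    (hbound : ∀ x, ‖((φ x).symm : X →L[ℝ] X)‖ ≤ M) : IsLocallyInjective f := by
  intro x
  obtain ⟨r, hr, happ⟩ := approx_at hcont hdf (ε := (2 * M)⁻¹) (by positivity) x
  refine ⟨ball x r, isOpen_ball, mem_ball_self hr, fun u hu v hv huv => ?_⟩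
  have h := antilip hM hbound (happ x (mem_closedBall_self hr.le))
    (ball_subset_closedBall hu) (ball_subset_closedBall hv)
  rw [huv, sub_self, norm_zero, mul_zero] at h
  exact sub_eq_zero.mp (norm_le_zero_iff.mp h)

theorem lift_near (hM : 0 < M) (hbound : ∀ x, ‖((φ x).symm : X →L[ℝ] X)‖ ≤ M)
    {s : Set ℝ} {Q P : ℝ → X} {δ : ℝ} (hδ : 0 < δ)
    (hQ : ContinuousOn Q s) (hP : ContinuousOn P s)
    (happ : ∀ u ∈ s, ApproximatesLinearOn f (φ (Q u) : X →L[ℝ] X) (closedBall (Q u) δ)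
      (Real.toNNReal (2 * M)⁻¹))
    (hclose : ∀ u ∈ s, ‖P u - f (Q u)‖ ≤ δ / (4 * M)) :
    ∃ x : ℝ → X, ContinuousOn x s ∧
      ∀ u ∈ s, f (x u) = P u ∧ ‖x u - Q u‖ ≤ 2 * M * ‖P u - f (Q u)‖ := by
  have hex : ∀ u : ℝ, ∃ z : X, u ∈ s → (f z = P u ∧ ‖z - Q u‖ ≤ 2 * M * ‖P u - f (Q u)‖) := by
    intro u
    by_cases hu : u ∈ s
    · have hy : ‖P u - f (Q u)‖ ≤ δ / (2 * M) := by
        refine (hclose u hu).trans ?_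
        rw [div_le_div_iff₀ (by positivity) (by positivity)]
        nlinarith
      obtain ⟨z, hz, hfz⟩ := surj_near hM hbound hδ (happ u hu) hy
      exact ⟨z, fun _ => ⟨hfz, hz⟩⟩
    · exact ⟨0, fun h => absurd h hu⟩
  choose x hx using hex
  have hprop : ∀ u ∈ s, f (x u) = P u ∧ ‖x u - Q u‖ ≤ 2 * M * ‖P u - f (Q u)‖ := fun u hu => hx u hu
  have hhalf : 2 * M * (δ / (4 * M)) = δ / 2 := by field_simp; ring
  have hball : ∀ u ∈ s, ‖x u - Q u‖ ≤ δ / 2 := by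
    intro u hu
    refine (hprop u hu).2.trans ?_
    rw [← hhalf]
    gcongr
    exact hclose u hu
  refine ⟨x, fun u hu => ?_, hprop⟩
  have hQu : ∀ᶠ v in 𝓝[s] u, dist (Q v) (Q u) ≤ δ / 2 := by
    have := hQ u hu (Metric.closedBall_mem_nhds (Q u) (half_pos hδ))
    filter_upwards [this] with v hv using mem_closedBall.mp hv
  have hmem : ∀ᶠ v in 𝓝[s] u, v ∈ s := self_mem_nhdsWithin
  have key : ∀ᶠ v in 𝓝[s] u, ‖x v - x u‖ ≤ 2 * M * ‖P v - P u‖ := by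
    filter_upwards [hQu, hmem] with v hv1 hv2
    have hxv : x v ∈ closedBall (Q u) δ := by
      rw [mem_closedBall, dist_eq_norm]
      calc ‖x v - Q u‖ ≤ ‖x v - Q v‖ + ‖Q v - Q u‖ := norm_sub_le_norm_sub_add_norm_sub _ _ _
        _ ≤ δ / 2 + δ / 2 := by
            rw [dist_eq_norm] at hv1
            exact add_le_add (hball v hv2) hv1
        _ = δ := by ring
    have hxu : x u ∈ closedBall (Q u) δ := by
      rw [mem_closedBall, dist_eq_norm]
      exact (hball u hu).trans (by linarith)
    have h1 := antilip hM hbound (happ u hu) hxv hxu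
    rw [(hprop v hv2).1, (hprop u hu).1] at h1
    exact h1
  have hP0 : Tendsto (fun v => 2 * M * ‖P v - P u‖) (𝓝[s] u) (𝓝 0) := by
    have h1 : Tendsto (fun v => ‖P v - P u‖) (𝓝[s] u) (𝓝 0) := by
      have h0 : Tendsto (fun v => P v - P u) (𝓝[s] u) (𝓝 (P u - P u)) :=
        Filter.Tendsto.sub (hP u hu) tendsto_const_nhds
      rw [sub_self] at h0
      simpa using h0.norm
    simpa using h1.const_mul (2 * M)
  have : Tendsto (fun v => ‖x v - x u‖) (𝓝[s] u) (𝓝 0) :=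
    squeeze_zero' (Eventually.of_forall fun v => norm_nonneg _) key hP0
  exact tendsto_iff_norm_sub_tendsto_zero.mpr this

theorem lift_exists (hM : 0 < M) (hcont : Continuous fun x => (φ x : X →L[ℝ] X))
    (hdf : ∀ x, HasFDerivAt f (φ x : X →L[ℝ] X) x)
    (hbound : ∀ x, ‖((φ x).symm : X →L[ℝ] X)‖ ≤ M) (y : X) :
    ∃ x : ℝ → X, ContinuousOn x (Icc 0 1) ∧ x 0 = 0 ∧
      ∀ t ∈ Icc (0:ℝ) 1, f (x t) = f 0 + t • (y - f 0) := by
  classical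
  have hfc : Continuous f := continuous_iff_continuousAt.mpr fun x => (hdf x).continuousAt
  set w : X := y - f 0 with hw
  set p : ℝ → X := fun t => f 0 + t • w with hp
  have hpc : Continuous p := continuous_const.add (continuous_id.smul continuous_const)
  have hpdiff : ∀ a b : ℝ, p a - p b = (a - b) • w := by
    intro a b
    simp only [hp, sub_smul]
    abel
  set K : ℝ := 2 * M * ‖w‖ with hK
  have hK0 : 0 ≤ K := by positivity
  have sep : IsSeparatedMap f := T2Space.isSeparatedMap f
  have inj : IsLocallyInjective f := loc_inj hM hcont hdf hbound
  have huniq : ∀ (b : ℝ) (x1 x2 : ℝ → X), 0 ≤ b → ContinuousOn x1 (Icc 0 b) →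
      ContinuousOn x2 (Icc 0 b) →
      (∀ u ∈ Icc (0:ℝ) b, f (x1 u) = p u) → (∀ u ∈ Icc (0:ℝ) b, f (x2 u) = p u) →
      x1 0 = x2 0 → ∀ u ∈ Icc (0:ℝ) b, x1 u = x2 u := by
    intro b x1 x2 hb h1 h2 hf1 hf2 h0 u hu
    exact sep.eqOn_of_comp_eqOn inj isPreconnected_Icc h1 h2
      (fun v hv => by simp only [Function.comp_apply, hf1 v hv, hf2 v hv])
      (left_mem_Icc.mpr hb) h0 hu
  set T : Set ℝ := {t : ℝ | ∃ x : ℝ → X, ContinuousOn x (Icc 0 t) ∧ x 0 = 0 ∧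
      ∀ u ∈ Icc (0:ℝ) t, f (x u) = p u} with hT
  have hT0 : (0:ℝ) ∈ T := by
    refine ⟨fun _ => 0, continuousOn_const, rfl, fun u hu => ?_⟩
    have hu0 : u = 0 := le_antisymm hu.2 hu.1
    simp [hu0, hp]
  have hTdc : ∀ t ∈ T, ∀ t', 0 ≤ t' → t' ≤ t → t' ∈ T := by
    rintro t ⟨x, hx1, hx2, hx3⟩ t' h0 hle
    exact ⟨x, hx1.mono (Icc_subset_Icc le_rfl hle), hx2,
      fun u hu => hx3 u ⟨hu.1, hu.2.trans hle⟩⟩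
  -- extension step
  have hext : ∀ t, 0 ≤ t → t ∈ T → ∃ η > 0, ∀ t', t ≤ t' → t' ≤ t + η → t' ∈ T := by
    rintro t ht ⟨x, hx1, hx2, hx3⟩
    set a : X := x t with ha
    have hfa : f a = p t := hx3 t ⟨ht, le_rfl⟩
    obtain ⟨r, hrpos, happ⟩ := approx_at hcont hdf
      (show (0:ℝ) < (2 * M)⁻¹ by positivity) a
    set η : ℝ := (r / (4 * M)) / (‖w‖ + 1) with hη
    have hw1 : (0:ℝ) < ‖w‖ + 1 := by positivity
    have hηpos : 0 < η := by positivity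
    have hηw : η * ‖w‖ ≤ r / (4 * M) := by
      have h1 : η * (‖w‖ + 1) = r / (4 * M) := by
        rw [hη]; field_simp
      nlinarith [norm_nonneg w]
    refine ⟨η, hηpos, fun t' h1 h2 => ?_⟩
    have happQ : ∀ u ∈ Icc t t',
        ApproximatesLinearOn f (φ a : X →L[ℝ] X) (closedBall a r) (Real.toNNReal (2 * M)⁻¹) :=
      fun _ _ => happ a (mem_closedBall_self hrpos.le)
    have hcl : ∀ u ∈ Icc t t', ‖p u - f a‖ ≤ r / (4 * M) := by
      intro u hu
      rw [hfa, hpdiff]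
      rw [norm_smul, Real.norm_eq_abs, abs_of_nonneg (by linarith [hu.1] : (0:ℝ) ≤ u - t)]
      calc (u - t) * ‖w‖ ≤ η * ‖w‖ := by
            have : u - t ≤ η := by
              have := hu.2; linarith
            exact mul_le_mul_of_nonneg_right this (norm_nonneg w)
        _ ≤ r / (4 * M) := hηw
    obtain ⟨x2, hx2c, hx2p⟩ := lift_near (Q := fun _ => a) (P := p) hM hbound hrpos
      continuousOn_const hpc.continuousOn happQ hcl
    have hx2t : x2 t = a := by
      have hb := (hx2p t (left_mem_Icc.mpr (le_trans h1 le_rfl))).2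
      rw [hfa, sub_self, norm_zero, mul_zero] at hb
      have := norm_le_zero_iff.mp hb
      exact sub_eq_zero.mp this
    set x3 : ℝ → X := fun u => if u ≤ t then x u else x2 u with hx3d
    have hx3x : ∀ v, v ≤ t → x3 v = x v := fun v hv => if_pos hv
    have hx3x2 : ∀ v ∈ Icc t t', x3 v = x2 v := by
      intro v hv
      by_cases hvt : v ≤ t
      · have hveq : v = t := le_antisymm hvt hv.1
        rw [hveq, hx3x t le_rfl, ← ha, hx2t]
      · exact if_neg hvt
    refine ⟨x3, ?_, ?_, ?_⟩
    · -- continuity on Icc 0 t'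
      intro u hu
      rcases lt_trichotomy u t with hul | heq | hur
      · have hcw : ContinuousWithinAt x3 (Icc 0 t) u :=
          (hx1 u ⟨hu.1, hul.le⟩).congr (fun v hv => hx3x v hv.2) (hx3x u hul.le)
        refine hcw.mono_of_mem_nhdsWithin ?_
        rw [mem_nhdsWithin]
        exact ⟨Iio t, isOpen_Iio, hul, fun v hv => ⟨hv.2.1, hv.1.le⟩⟩
      · have hcl1 : ContinuousWithinAt x3 (Icc 0 t) u :=
          (hx1 u ⟨hu.1, heq.le⟩).congr (fun v hv => hx3x v hv.2) (hx3x u heq.le)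
        have hcl2 : ContinuousWithinAt x3 (Icc t t') u := by
          refine (hx2c u ?_).congr hx3x2 ?_
          · rw [heq]; exact left_mem_Icc.mpr h1
          · exact hx3x2 u (by rw [heq]; exact left_mem_Icc.mpr h1)
        have hun := hcl1.union hcl2
        rwa [Icc_union_Icc_eq_Icc ht h1] at hun
      · have hcw : ContinuousWithinAt x3 (Icc 0 t' ∩ Ioi t) u := by
          refine ((hx2c u ⟨hur.le, hu.2⟩).mono
            (fun v hv => ⟨le_of_lt hv.2, hv.1.2⟩)).congr ?_ ?_
          · intro v hv
            exact hx3x2 v ⟨le_of_lt hv.2, hv.1.2⟩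
          · exact hx3x2 u ⟨hur.le, hu.2⟩
        refine hcw.mono_of_mem_nhdsWithin ?_
        exact inter_mem self_mem_nhdsWithin
          (mem_nhdsWithin_of_mem_nhds (Ioi_mem_nhds hur))
    · rw [hx3x 0 ht]; exact hx2
    · intro u hu
      by_cases hut : u ≤ t
      · rw [hx3x u hut]; exact hx3 u ⟨hu.1, hut⟩
      · rw [hx3x2 u ⟨le_of_not_ge hut, hu.2⟩]
        exact (hx2p u ⟨le_of_not_ge hut, hu.2⟩).1
  -- the continuation argument
  set S : Set ℝ := T ∩ Icc (0:ℝ) 1 with hS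
  have hS0 : (0:ℝ) ∈ S := ⟨hT0, left_mem_Icc.mpr zero_le_one⟩
  have hSbdd : BddAbove S := ⟨1, fun s hs => hs.2.2⟩
  set τ : ℝ := sSup S with hτ
  have hτ0 : 0 ≤ τ := le_csSup hSbdd hS0
  have hτ1 : τ ≤ 1 := csSup_le ⟨0, hS0⟩ fun s hs => hs.2.2
  have hτT : τ ∈ T := by
    rcases eq_or_lt_of_le hτ0 with h0 | hτpos
    · rw [← h0]; exact hT0
    have hIco : ∀ s, 0 ≤ s → s < τ → s ∈ T := by
      intro s h0s hsτ
      obtain ⟨s', hs'S, hss'⟩ := exists_lt_of_lt_csSup ⟨0, hS0⟩ hsτ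
      exact hTdc s' hs'S.1 s h0s hss'.le
    have hEx : ∀ s : ℝ, ∃ x : ℝ → X, s ∈ Ico (0:ℝ) τ →
        (ContinuousOn x (Icc 0 s) ∧ x 0 = 0 ∧ ∀ u ∈ Icc (0:ℝ) s, f (x u) = p u) := by
      intro s
      by_cases hs : s ∈ Ico (0:ℝ) τ
      · obtain ⟨x, h⟩ := hIco s hs.1 hs.2; exact ⟨x, fun _ => h⟩
      · exact ⟨fun _ => 0, fun h => absurd h hs⟩
    choose L hL using hEx
    have hagree : ∀ s1, s1 ∈ Ico (0:ℝ) τ → ∀ s2, s2 ∈ Ico (0:ℝ) τ → ∀ u, 0 ≤ u →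
        u ≤ s1 → u ≤ s2 → L s1 u = L s2 u := by
      intro s1 hs1 s2 hs2 u h0u hu1 hu2
      obtain ⟨c1, c01, cp1⟩ := hL s1 hs1
      obtain ⟨c2, c02, cp2⟩ := hL s2 hs2
      exact huniq (min s1 s2) (L s1) (L s2) (le_min (h0u.trans hu1) (h0u.trans hu2))
        (c1.mono (Icc_subset_Icc le_rfl (min_le_left _ _)))
        (c2.mono (Icc_subset_Icc le_rfl (min_le_right _ _)))
        (fun v hv => cp1 v ⟨hv.1, hv.2.trans (min_le_left _ _)⟩)
        (fun v hv => cp2 v ⟨hv.1, hv.2.trans (min_le_right _ _)⟩)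
        (by rw [c01, c02]) u ⟨h0u, le_min hu1 hu2⟩
    set x0 : ℝ → X := fun u => L ((u + τ) / 2) u with hx0
    have hmid1 : ∀ u, 0 ≤ u → u < τ → (u + τ) / 2 ∈ Ico (0:ℝ) τ := by
      intro u h0 hu
      constructor
      · linarith
      · linarith
    have hmid2 : ∀ u : ℝ, u < τ → u ≤ (u + τ) / 2 := by intro u hu; linarith
    have hx0L : ∀ s ∈ Ico (0:ℝ) τ, ∀ u, 0 ≤ u → u ≤ s → x0 u = L s u := by
      intro s hs u h0u hus
      have huτ : u < τ := lt_of_le_of_lt hus hs.2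
      exact hagree _ (hmid1 u h0u huτ) s hs u h0u (hmid2 u huτ) hus
    have hx0f : ∀ u, 0 ≤ u → u < τ → f (x0 u) = p u := by
      intro u h0 huτ
      have h1 := hmid1 u h0 huτ
      have h2 := (hL _ h1).2.2 u ⟨h0, hmid2 u huτ⟩
      exact h2
    have hx0z : x0 0 = 0 := by
      have h1 : (0 + τ) / 2 ∈ Ico (0:ℝ) τ := hmid1 0 le_rfl hτpos
      exact (hL _ h1).2.1
    have hx0cont : ContinuousOn x0 (Ico 0 τ) := by
      intro u hu
      have h1 := hmid1 u hu.1 hu.2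
      have hus : u < (u + τ) / 2 := by
        have := hu.2; linarith
      have hcw : ContinuousWithinAt x0 (Icc 0 ((u + τ) / 2)) u := by
        refine ((hL _ h1).1 u ⟨hu.1, hus.le⟩).congr ?_ ?_
        · intro v hv; exact hx0L _ h1 v hv.1 hv.2
        · exact hx0L _ h1 u hu.1 hus.le
      refine hcw.mono_of_mem_nhdsWithin ?_
      rw [mem_nhdsWithin]
      exact ⟨Iio ((u + τ) / 2), isOpen_Iio, hus, fun v hv => ⟨hv.2.1, hv.1.le⟩⟩
    have hlip : ∀ u, u ∈ Ico (0:ℝ) τ → ∀ v, v ∈ Ico (0:ℝ) τ → u ≤ v →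
        ‖x0 v - x0 u‖ ≤ K * (v - u) := by
      intro u hu v hv huv
      set A : Set ℝ := {s : ℝ | ‖x0 s - x0 u‖ ≤ K * (s - u)} with hA
      have hsub : Icc u v ⊆ Ico 0 τ := fun s hs =>
        ⟨hu.1.trans hs.1, lt_of_le_of_lt hs.2 hv.2⟩
      have hAclosed : IsClosed (A ∩ Icc u v) := by
        have hcont' : ContinuousOn (fun s => ‖x0 s - x0 u‖ - K * (s - u)) (Icc u v) :=
          (((hx0cont.mono hsub).sub continuousOn_const).norm).sub
            (continuousOn_const.mul ((continuousOn_id).sub continuousOn_const))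
        have heq : A ∩ Icc u v = Icc u v ∩
            ((fun s => ‖x0 s - x0 u‖ - K * (s - u)) ⁻¹' Iic 0) := by
          ext s
          simp only [hA, mem_inter_iff, mem_setOf_eq, mem_preimage, mem_Iic, sub_nonpos]
          tauto
        rw [heq]
        exact hcont'.preimage_isClosed_of_isClosed isClosed_Icc isClosed_Iic
      have hmemu : u ∈ A := by
        simp only [hA, mem_setOf_eq, sub_self, norm_zero, mul_zero, le_refl]
      have step : ∀ s ∈ A ∩ Ico u v, ∀ s' ∈ Ioi s, (A ∩ Ioc s s').Nonempty := by
        intro s hs s' hs'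
        have hsmem : s ∈ Ico 0 τ := hsub ⟨hs.2.1, hs.2.2.le⟩
        obtain ⟨r, hrpos, happ⟩ := approx_at hcont hdf
          (show (0:ℝ) < (2 * M)⁻¹ by positivity) (x0 s)
        obtain ⟨δ', hδ'pos, hδ'⟩ := Metric.continuousWithinAt_iff.mp (hx0cont s hsmem) r hrpos
        set s'' : ℝ := min (min s' v) (s + δ' / 2) with hs''
        have hs''gt : s < s'' := by
          apply lt_min (lt_min hs' hs.2.2)
          linarith
        have hs''le : s'' ≤ v := le_trans (min_le_left _ _) (min_le_right _ _)
        have hs''les' : s'' ≤ s' := le_trans (min_le_left _ _) (min_le_left _ _)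
        have hs''mem : s'' ∈ Ico 0 τ := hsub ⟨(hs.2.1.trans hs''gt.le), hs''le⟩
        have hdist : dist s'' s < δ' := by
          rw [Real.dist_eq, abs_of_nonneg (by linarith : (0:ℝ) ≤ s'' - s)]
          have : s'' ≤ s + δ' / 2 := min_le_right _ _
          linarith
        have hclose := hδ' hs''mem hdist
        have happs := happ (x0 s) (mem_closedBall_self hrpos.le)
        have hanti := antilip hM hbound happs
          (mem_closedBall.mpr hclose.le) (mem_closedBall_self hrpos.le)
        rw [hx0f s'' hs''mem.1 hs''mem.2, hx0f s hsmem.1 hsmem.2, hpdiff] at hanti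
        rw [norm_smul, Real.norm_eq_abs,
          abs_of_nonneg (by linarith : (0:ℝ) ≤ s'' - s)] at hanti
        have hbnd : ‖x0 s'' - x0 s‖ ≤ K * (s'' - s) := by
          calc ‖x0 s'' - x0 s‖ ≤ 2 * M * ((s'' - s) * ‖w‖) := hanti
            _ = K * (s'' - s) := by rw [hK]; ring
        refine ⟨s'', ?_, hs''gt, hs''les'⟩
        have hsA : ‖x0 s - x0 u‖ ≤ K * (s - u) := hs.1
        show ‖x0 s'' - x0 u‖ ≤ K * (s'' - u)
        calc ‖x0 s'' - x0 u‖ ≤ ‖x0 s'' - x0 s‖ + ‖x0 s - x0 u‖ :=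
              norm_sub_le_norm_sub_add_norm_sub _ _ _
          _ ≤ K * (s'' - s) + K * (s - u) := add_le_add hbnd hsA
          _ = K * (s'' - u) := by ring
      have := hAclosed.Icc_subset_of_forall_exists_gt hmemu step
      exact this (right_mem_Icc.mpr huv)
    -- limit at τ
    set seq : ℕ → ℝ := fun n => τ - τ / (n + 1) with hseq
    have hseqmem : ∀ n, seq n ∈ Ico 0 τ := by
      intro n
      have hn1 : (0:ℝ) < n + 1 := by positivity
      constructor
      · have : τ / (n + 1) ≤ τ := by
          apply div_le_self hτ0
          have : (1:ℝ) ≤ n + 1 := by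
            have : (0:ℝ) ≤ n := Nat.cast_nonneg n
            linarith
          exact this
        simp only [hseq]; linarith
      · have : 0 < τ / (n + 1) := div_pos hτpos hn1
        simp only [hseq]; linarith
    have hdivlim : Tendsto (fun n : ℕ => τ / (n + 1)) atTop (𝓝 0) := by
      have h1 := tendsto_one_div_add_atTop_nhds_zero_nat (𝕜 := ℝ)
      have h2 := h1.const_mul τ
      rw [mul_zero] at h2
      convert h2 using 2 with n
      rw [mul_one_div]
    have hseqlim : Tendsto seq atTop (𝓝 τ) := by
      have := tendsto_const_nhds (x := τ) (f := atTop (α := ℕ)) |>.sub hdivlim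
      rw [sub_zero] at this
      exact this
    have hcauchy : CauchySeq fun n => x0 (seq n) := by
      apply cauchySeq_of_le_tendsto_0 (fun N : ℕ => K * (τ / (N + 1)))
      · intro n m N hn hm
        have hb : ∀ i j : ℕ, N ≤ i → N ≤ j → seq i ≤ seq j →
            dist (x0 (seq i)) (x0 (seq j)) ≤ K * (τ / (N + 1)) := by
          intro i j hi hj hij
          rw [dist_eq_norm, norm_sub_rev]
          refine (hlip (seq i) (hseqmem i) (seq j) (hseqmem j) hij).trans ?_
          have h1 : seq j - seq i = τ / (i + 1) - τ / (j + 1) := by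
            simp only [hseq]; ring
          have h2 : τ / (i + 1) ≤ τ / (N + 1) := by
            apply div_le_div_of_nonneg_left hτ0 ?_ ?_
            · positivity
            · have : (N:ℝ) ≤ i := Nat.cast_le.mpr hi
              linarith
          have h3 : 0 < τ / ((j:ℝ) + 1) := div_pos hτpos (by positivity)
          have h4 : seq j - seq i ≤ τ / (N + 1) := by rw [h1]; linarith
          exact mul_le_mul_of_nonneg_left h4 hK0
        rcases le_total (seq n) (seq m) with h | h
        · exact hb n m hn hm h
        · rw [dist_comm]; exact hb m n hm hn h
      · have h2 := hdivlim.const_mul K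
        rw [mul_zero] at h2
        exact h2
    obtain ⟨ξ, hξ⟩ := cauchySeq_tendsto_of_complete hcauchy
    have hxi : ∀ s ∈ Ico (0:ℝ) τ, ‖x0 s - ξ‖ ≤ K * (τ - s) := by
      intro s hs
      have hlim : Tendsto (fun n => ‖x0 s - x0 (seq n)‖) atTop (𝓝 ‖x0 s - ξ‖) :=
        (Filter.Tendsto.sub tendsto_const_nhds hξ).norm
      refine le_of_tendsto hlim ?_
      have hev : ∀ᶠ n in atTop, s < seq n := hseqlim.eventually (eventually_gt_nhds hs.2)
      filter_upwards [hev] with n hn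
      calc ‖x0 s - x0 (seq n)‖ = ‖x0 (seq n) - x0 s‖ := norm_sub_rev _ _
        _ ≤ K * (seq n - s) := hlip s hs (seq n) (hseqmem n) hn.le
        _ ≤ K * (τ - s) := by
            have := (hseqmem n).2
            exact mul_le_mul_of_nonneg_left (by linarith) hK0
    have hfξ : f ξ = p τ := by
      have h1 : Tendsto (fun n => f (x0 (seq n))) atTop (𝓝 (f ξ)) :=
        ((hfc.tendsto ξ).comp hξ)
      have h2 : ∀ n, f (x0 (seq n)) = p (seq n) := fun n =>
        hx0f (seq n) (hseqmem n).1 (hseqmem n).2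
      have h3 : Tendsto (fun n => p (seq n)) atTop (𝓝 (p τ)) := (hpc.tendsto τ).comp hseqlim
      have h1' : Tendsto (fun n => p (seq n)) atTop (𝓝 (f ξ)) := by
        simpa only [h2] using h1
      exact tendsto_nhds_unique h1' h3
    set x1 : ℝ → X := fun u => if u < τ then x0 u else ξ with hx1d
    have hx1ξ : x1 τ = ξ := if_neg (lt_irrefl τ)
    have hx1bound : ∀ u ∈ Icc (0:ℝ) τ, ‖x1 u - ξ‖ ≤ K * (τ - u) := by
      intro u hu
      by_cases huτ : u < τ
      · have : x1 u = x0 u := if_pos huτ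
        rw [this]
        exact hxi u ⟨hu.1, huτ⟩
      · have hueq : u = τ := le_antisymm hu.2 (not_lt.mp huτ)
        rw [hueq, hx1ξ, sub_self, norm_zero, sub_self, mul_zero]
    refine ⟨x1, ?_, ?_, ?_⟩
    · intro u hu
      by_cases huτ : u < τ
      · have hcw : ContinuousWithinAt x1 (Ico 0 τ) u :=
          (hx0cont u ⟨hu.1, huτ⟩).congr (fun v hv => if_pos hv.2) (if_pos huτ)
        refine hcw.mono_of_mem_nhdsWithin ?_
        rw [mem_nhdsWithin]
        exact ⟨Iio τ, isOpen_Iio, huτ, fun v hv => ⟨hv.2.1, hv.1⟩⟩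
      · have hueq : u = τ := le_antisymm hu.2 (not_lt.mp huτ)
        have hτcw : ContinuousWithinAt x1 (Icc 0 τ) τ := by
          have hzero : Tendsto (fun v => K * (τ - v)) (𝓝[Icc 0 τ] τ) (𝓝 0) := by
            have hc : Tendsto (fun v : ℝ => K * (τ - v)) (𝓝 τ) (𝓝 (K * (τ - τ))) :=
              (tendsto_const_nhds.mul (tendsto_const_nhds.sub tendsto_id))
            rw [sub_self, mul_zero] at hc
            exact hc.mono_left nhdsWithin_le_nhds
          have hsq : Tendsto (fun v => ‖x1 v - ξ‖) (𝓝[Icc 0 τ] τ) (𝓝 0) := by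
            refine squeeze_zero' (Eventually.of_forall fun v => norm_nonneg _) ?_ hzero
            filter_upwards [self_mem_nhdsWithin] with v hv
            exact hx1bound v hv
          have := tendsto_iff_norm_sub_tendsto_zero.mpr hsq
          rwa [ContinuousWithinAt, hx1ξ]
        rw [hueq]
        exact hτcw
    · have h0τ : (0:ℝ) < τ := hτpos
      have : x1 0 = x0 0 := if_pos h0τ
      rw [this]
      exact hx0z
    · intro u hu
      by_cases huτ : u < τ
      · have : x1 u = x0 u := if_pos huτ
        rw [this]
        exact hx0f u hu.1 huτ
      · have hueq : u = τ := le_antisymm hu.2 (not_lt.mp huτ)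
        rw [hueq, hx1ξ]
        exact hfξ
  -- τ must equal 1
  have h1T : (1:ℝ) ∈ T := by
    rcases lt_or_ge τ 1 with hlt | hge
    · exfalso
      obtain ⟨η, hηpos, hstep⟩ := hext τ hτ0 hτT
      set t' : ℝ := min 1 (τ + η) with ht'
      have ht'gt : τ < t' := lt_min hlt (by linarith)
      have ht'T : t' ∈ T := hstep t' ht'gt.le (min_le_right _ _)
      have ht'S : t' ∈ S := ⟨ht'T, ⟨by linarith, min_le_left _ _⟩⟩
      have := le_csSup hSbdd ht'S
      linarith
    · have heq : τ = 1 := le_antisymm hτ1 hge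
      rw [← heq]
      exact hτT
  obtain ⟨x, hc1, hc2, hc3⟩ := h1T
  exact ⟨x, hc1, hc2, fun t htt => hc3 t htt⟩

theorem uniform_approx (hM : 0 < M) (hcont : Continuous fun x => (φ x : X →L[ℝ] X))
    (hdf : ∀ x, HasFDerivAt f (φ x : X →L[ℝ] X) x)
    {C : Set X} (hC : IsCompact C) :
    ∃ δ > 0, ∀ z ∈ C,
      ApproximatesLinearOn f (φ z : X →L[ℝ] X) (closedBall z δ) (Real.toNNReal (2 * M)⁻¹) := by
  rcases C.eq_empty_or_nonempty with hCe | hCne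
  · exact ⟨1, one_pos, by simp [hCe]⟩
  have hrad : ∀ a : X, ∃ r > 0, ∀ z ∈ closedBall a r,
      ApproximatesLinearOn f (φ z : X →L[ℝ] X) (closedBall z r) (Real.toNNReal (2 * M)⁻¹) :=
    fun a => approx_at hcont hdf (by positivity) a
  choose r hr hball using hrad
  obtain ⟨t, _, htcover⟩ := hC.elim_nhds_subcover (fun a => ball a (r a))
    (fun a _ => ball_mem_nhds a (hr a))
  have htne : t.Nonempty := by
    rcases hCne with ⟨z0, hz0⟩
    rcases mem_iUnion₂.mp (htcover hz0) with ⟨a, ha, _⟩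
    exact ⟨a, ha⟩
  refine ⟨t.inf' htne r, ?_, ?_⟩
  · exact (Finset.lt_inf'_iff htne).mpr fun a _ => hr a
  · intro z hz
    rcases mem_iUnion₂.mp (htcover hz) with ⟨a, ha, hza⟩
    have h1 := hball a z (ball_subset_closedBall hza)
    exact h1.mono_set (closedBall_subset_closedBall (Finset.inf'_le r ha))

end HadamardAux

/-- Under Hadamard's hypotheses, `f` has a continuous right inverse on every
compact set `K`. -/
theorem hadamard_right_inverse_on_compact
    {X : Type*} [NormedAddCommGroup X] [NormedSpace ℝ X] [CompleteSpace X]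
    (f : X → X) (φ : X → X ≃L[ℝ] X) (M : ℝ) (hM : 0 < M)
    (hdf : ∀ x, HasFDerivAt f (φ x : X →L[ℝ] X) x)
    (hcont : Continuous fun x => (φ x : X →L[ℝ] X))
    (hbound : ∀ x, ‖((φ x).symm : X →L[ℝ] X)‖ ≤ M)
    (K : Set X) (hK : IsCompact K) :
    ∃ g : X → X, ContinuousOn g K ∧ ∀ y ∈ K, f (g y) = y := by
  classical
  open HadamardAux in
  have sep : IsSeparatedMap f := T2Space.isSeparatedMap f
  have inj : IsLocallyInjective f := HadamardAux.loc_inj hM hcont hdf hbound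
  -- chosen lifts
  choose q hq1 hq2 hq3 using HadamardAux.lift_exists hM hcont hdf hbound
  set g : X → X := fun y => q y 1 with hg
  have hfg : ∀ y, f (g y) = y := by
    intro y
    have := hq3 y 1 (Set.right_mem_Icc.mpr zero_le_one)
    simpa using this
  -- local Lipschitz continuity of g
  have hloclip : ∀ y : X, ∃ δ > 0, ∀ y' : X, ‖y' - y‖ ≤ δ / (4 * M) →
      ‖g y' - g y‖ ≤ 2 * M * ‖y' - y‖ := by
    intro y
    have hCcomp : IsCompact (q y '' Set.Icc 0 1) :=
      (isCompact_Icc).image_of_continuousOn (hq1 y)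
    obtain ⟨δ, hδpos, happ⟩ := HadamardAux.uniform_approx hM hcont hdf hCcomp
    refine ⟨δ, hδpos, fun y' hy' => ?_⟩
    set p' : ℝ → X := fun t => f 0 + t • (y' - f 0) with hp'
    have hp'c : Continuous p' := continuous_const.add (continuous_id.smul continuous_const)
    have hdiff : ∀ u : ℝ, p' u - (f 0 + u • (y - f 0)) = u • (y' - y) := by
      intro u
      simp only [hp']
      module
    have happQ : ∀ u ∈ Set.Icc (0:ℝ) 1,
        ApproximatesLinearOn f (φ (q y u) : X →L[ℝ] X) (Metric.closedBall (q y u) δ)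
          (Real.toNNReal (2 * M)⁻¹) :=
      fun u hu => happ (q y u) (Set.mem_image_of_mem _ hu)
    have hclose : ∀ u ∈ Set.Icc (0:ℝ) 1, ‖p' u - f (q y u)‖ ≤ δ / (4 * M) := by
      intro u hu
      rw [hq3 y u hu, hdiff u, norm_smul, Real.norm_eq_abs, abs_of_nonneg hu.1]
      calc u * ‖y' - y‖ ≤ 1 * ‖y' - y‖ :=
            mul_le_mul_of_nonneg_right hu.2 (norm_nonneg _)
        _ = ‖y' - y‖ := one_mul _
        _ ≤ δ / (4 * M) := hy'
    obtain ⟨x', hx'c, hx'p⟩ := HadamardAux.lift_near hM hbound hδpos (hq1 y)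
      hp'c.continuousOn happQ hclose
    have hx'0 : x' 0 = 0 := by
      have hb := (hx'p 0 (Set.left_mem_Icc.mpr zero_le_one)).2
      have h0 : p' 0 - f (q y 0) = 0 := by
        rw [hq3 y 0 (Set.left_mem_Icc.mpr zero_le_one), hdiff 0, zero_smul]
      rw [h0, norm_zero, mul_zero] at hb
      have := norm_le_zero_iff.mp hb
      rw [hq2 y] at this
      exact sub_eq_zero.mp this
    -- uniqueness : x' agrees with q y'
    have hquniq : q y' 1 = x' 1 := by
      refine sep.eqOn_of_comp_eqOn inj isPreconnected_Icc (hq1 y') hx'c ?_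
        (Set.left_mem_Icc.mpr zero_le_one) ?_ (Set.right_mem_Icc.mpr zero_le_one)
      · intro v hv
        simp only [Function.comp_apply]
        rw [hq3 y' v hv, (hx'p v hv).1]
      · rw [hq2 y', hx'0]
    have hb1 := (hx'p 1 (Set.right_mem_Icc.mpr zero_le_one)).2
    rw [hq3 y 1 (Set.right_mem_Icc.mpr zero_le_one), hdiff 1, one_smul] at hb1
    calc ‖g y' - g y‖ = ‖x' 1 - q y 1‖ := by simp only [hg]; rw [hquniq]
      _ ≤ 2 * M * ‖y' - y‖ := hb1
  -- continuity
  have hgc : Continuous g := by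
    rw [Metric.continuous_iff]
    intro y ε hε
    obtain ⟨δ, hδpos, hlip⟩ := hloclip y
    refine ⟨min (δ / (4 * M)) (ε / (2 * M + 1)), ?_, fun y' hy' => ?_⟩
    · have h1 : 0 < δ / (4 * M) := by positivity
      have h2 : 0 < ε / (2 * M + 1) := by positivity
      exact lt_min h1 h2
    · have h1 : ‖y' - y‖ < δ / (4 * M) := by
        rw [← dist_eq_norm]
        exact lt_of_lt_of_le hy' (min_le_left _ _)
      have h2 : ‖y' - y‖ < ε / (2 * M + 1) := by
        rw [← dist_eq_norm]
        exact lt_of_lt_of_le hy' (min_le_right _ _)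
      have h3 := hlip y' h1.le
      rw [dist_eq_norm]
      calc ‖g y' - g y‖ ≤ 2 * M * ‖y' - y‖ := h3
        _ ≤ (2 * M + 1) * ‖y' - y‖ :=
            mul_le_mul_of_nonneg_right (by linarith) (norm_nonneg _)
        _ < (2 * M + 1) * (ε / (2 * M + 1)) := by
            have h2M : (0:ℝ) < 2 * M + 1 := by linarith
            by_cases hnz : ‖y' - y‖ = 0
            · rw [hnz, mul_zero]
              positivity
            · exact (mul_lt_mul_iff_right₀ h2M).mpr h2
        _ = ε := by field_simp
  exact ⟨g, hgc.continuousOn, fun y _ => hfg y⟩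
end

section
/- Let X be a Banach space and let f : X → X be continuously (Fréchet) differentiable with f'(x) invertible for all x ∈ X and ‖[f'(x)]⁻¹‖ ≤ M for all x ∈ X, for some M > 0. Let K ⊆ X be a compact set with f(0) = 0 and 0 ∈ K. Then there exists a continuous map g : K → X such that f(g(y)) = y for all y ∈ K and g(0) = 0. -/
open Set Filter Metric Topology

section Hadamard

variable {X : Type*} [NormedAddCommGroup X] [NormedSpace ℝ X] [CompleteSpace X]

/-- `x` is a continuous lift of the segment `s ↦ s • y` under `f`, on `[0, t]`,
starting at `0`. -/
def IsLiftH (f : X → X) (y : X) (t : ℝ) (x : ℝ → X) : Prop :=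
  ContinuousOn x (Icc 0 t) ∧ x 0 = 0 ∧ ∀ s ∈ Icc 0 t, f (x s) = s • y

lemma IsLiftH.mono {f : X → X} {y : X} {t t' : ℝ} {x : ℝ → X}
    (h : IsLiftH f y t x) (h0 : 0 ≤ t') (htt : t' ≤ t) : IsLiftH f y t' x :=
  ⟨h.1.mono (Icc_subset_Icc_right htt), h.2.1,
    fun s hs => h.2.2 s ⟨hs.1, hs.2.trans htt⟩⟩

variable {f : X → X} {φ : X → X ≃L[ℝ] X}

/-- Uniqueness of lifts. -/
lemma liftH_unique (hst : ∀ x, HasStrictFDerivAt f (φ x : X →L[ℝ] X) x)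
    {y : X} {t : ℝ} {x₁ x₂ : ℝ → X} (ht : 0 ≤ t)
    (h₁ : IsLiftH f y t x₁) (h₂ : IsLiftH f y t x₂) :
    EqOn x₁ x₂ (Icc 0 t) := by
  haveI : PreconnectedSpace (Icc (0:ℝ) t) := Subtype.preconnectedSpace isPreconnected_Icc
  set S : Set (Icc (0:ℝ) t) := {s | x₁ s = x₂ s} with hS
  have hc1 : Continuous fun s : Icc (0:ℝ) t => x₁ s := h₁.1.restrict
  have hc2 : Continuous fun s : Icc (0:ℝ) t => x₂ s := h₂.1.restrict
  have hSclosed : IsClosed S := isClosed_eq hc1 hc2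
  have hSopen : IsOpen S := by
    rw [isOpen_iff_mem_nhds]
    intro s hs
    set e := (hst (x₁ s)).toOpenPartialHomeomorph f with he
    have hsrc : x₁ s ∈ e.source := (hst (x₁ s)).mem_toOpenPartialHomeomorph_source
    have hsrc2 : x₂ s ∈ e.source := by rwa [← hs]
    have hU : {u : Icc (0:ℝ) t | x₁ u ∈ e.source ∧ x₂ u ∈ e.source} ∈ 𝓝 s := by
      refine Filter.inter_mem ?_ ?_
      · exact hc1.continuousAt.preimage_mem_nhds (e.open_source.mem_nhds hsrc)
      · exact hc2.continuousAt.preimage_mem_nhds (e.open_source.mem_nhds hsrc2)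
    refine Filter.mem_of_superset hU ?_
    rintro u ⟨hu1, hu2⟩
    have hfe : f (x₁ u) = f (x₂ u) := by
      rw [h₁.2.2 u u.2, h₂.2.2 u u.2]
    have : e (x₁ u) = e (x₂ u) := by
      exact hfe
    exact e.injOn hu1 hu2 this
  have hne : S.Nonempty := by
    refine ⟨⟨0, le_refl 0, ht⟩, ?_⟩
    show x₁ 0 = x₂ 0
    rw [h₁.2.1, h₂.2.1]
  have := IsClopen.eq_univ ⟨hSclosed, hSopen⟩ hne
  intro s hs
  have : (⟨s, hs⟩ : Icc (0:ℝ) t) ∈ S := by rw [this]; trivial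
  exact this

/-- Lipschitz bound on lifts. -/
lemma liftH_lipschitz (hst : ∀ x, HasStrictFDerivAt f (φ x : X →L[ℝ] X) x)
    {M : ℝ} (hbound : ∀ x, ‖((φ x).symm : X →L[ℝ] X)‖ ≤ M)
    {y : X} {t : ℝ} {x : ℝ → X} (hx : IsLiftH f y t x)
    {a b : ℝ} (ha : a ∈ Icc 0 t) (hb : b ∈ Icc 0 t) (hab : a ≤ b) :
    ‖x b - x a‖ ≤ M * ‖y‖ * (b - a) := by
  have hsub : Icc a b ⊆ Icc 0 t := Icc_subset_Icc ha.1 hb.2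
  have hder : ∀ s ∈ Icc a b, HasDerivWithinAt x (((φ (x s)).symm : X →L[ℝ] X) y) (Icc a b) s := by
    intro s hs
    have hst' := hst (x s)
    have hfx : f (x s) = s • y := hx.2.2 s (hsub hs)
    have h1 : HasFDerivAt (hst'.localInverse f _ (x s)) (((φ (x s)).symm : X →L[ℝ] X)) (s • y) := by
      have := hst'.to_localInverse.hasFDerivAt
      rwa [hfx] at this
    have h2 : HasDerivAt (fun u : ℝ => u • y) y s := by
      simpa using (hasDerivAt_id s).smul_const y
    have h3 : HasDerivAt (fun u : ℝ => hst'.localInverse f _ (x s) (u • y))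
        (((φ (x s)).symm : X →L[ℝ] X) y) s := h1.comp_hasDerivAt s h2
    refine (h3.hasDerivWithinAt).congr_of_eventuallyEq ?_ ?_
    · have hmem : x s ∈ (hst'.toOpenPartialHomeomorph f).source :=
        hst'.mem_toOpenPartialHomeomorph_source
      have hcont : ContinuousWithinAt x (Icc a b) s :=
        (hx.1 s (hsub hs)).mono hsub
      have hev : ∀ᶠ u in 𝓝[Icc a b] s, x u ∈ (hst'.toOpenPartialHomeomorph f).source :=
        hcont ((hst'.toOpenPartialHomeomorph f).open_source.mem_nhds hmem)
      filter_upwards [hev, self_mem_nhdsWithin] with u hu hu'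
      have hfu : f (x u) = u • y := hx.2.2 u (hsub hu')
      show x u = hst'.localInverse f _ (x s) (u • y)
      rw [← hfu]
      exact ((hst'.toOpenPartialHomeomorph f).left_inv hu).symm
    · show x s = hst'.localInverse f _ (x s) (s • y)
      rw [← hfx]
      exact (hst'.localInverse_apply_image).symm
  have hbnd : ∀ s ∈ Ico a b, ‖((φ (x s)).symm : X →L[ℝ] X) y‖ ≤ M * ‖y‖ := by
    intro s _
    calc ‖((φ (x s)).symm : X →L[ℝ] X) y‖ ≤ ‖((φ (x s)).symm : X →L[ℝ] X)‖ * ‖y‖ :=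
          ContinuousLinearMap.le_opNorm _ _
      _ ≤ M * ‖y‖ := by
          apply mul_le_mul_of_nonneg_right (hbound _) (norm_nonneg _)
  have := norm_image_sub_le_of_norm_deriv_le_segment' hder hbnd b (right_mem_Icc.2 hab)
  linarith [this]


/-- Extension step: if lifts up to time `t` exist for all `y` near `y₀` with continuous
endpoint, and a chart of `f` covers the relevant part of the segment, then lifts exist up
to time `r`. -/
lemma liftH_extend {y₀ : X} {t r : ℝ} (ht0 : 0 ≤ t) (htr : t < r)
    (hQ : ∃ δ > 0, ∃ L : X → ℝ → X,
      (∀ y ∈ ball y₀ δ, IsLiftH f y t (L y)) ∧ ContinuousAt (fun y => L y t) y₀)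
    (e : OpenPartialHomeomorph X X) (hef : ⇑e = f)
    (hsrc : ∀ x : ℝ → X, IsLiftH f y₀ t x → x t ∈ e.source)
    (htgt : ∀ s ∈ Icc t r, s • y₀ ∈ e.target) :
    ∃ δ > 0, ∃ L : X → ℝ → X,
      (∀ y ∈ ball y₀ δ, IsLiftH f y r (L y)) ∧ ContinuousAt (fun y => L y r) y₀ := by
  obtain ⟨δ, hδ, L, hL, hLc⟩ := hQ
  have hq : L y₀ t ∈ e.source := hsrc _ (hL y₀ (mem_ball_self hδ))
  -- tube lemma: for `y` near `y₀` and `s ∈ [t, r]`, `s • y ∈ e.target`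
  obtain ⟨u, v, hu, hv, hIu, hyv, huv⟩ :=
    generalized_tube_lemma isCompact_Icc (isCompact_singleton (x := y₀))
      (IsOpen.preimage (continuous_fst.smul continuous_snd) e.open_target)
      (by
        rintro ⟨s, y⟩ ⟨hs, hy⟩
        simp only [mem_singleton_iff] at hy
        simp only [mem_preimage]
        rw [hy]
        exact htgt s hs)
  obtain ⟨δ₁, hδ₁, hballv⟩ := Metric.isOpen_iff.1 hv y₀ (hyv rfl)
  have h1 : ∀ y ∈ ball y₀ δ₁, ∀ s ∈ Icc t r, s • y ∈ e.target := by
    intro y hy s hs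
    exact huv (mk_mem_prod (hIu hs) (hballv hy))
  -- endpoints near `y₀` stay in `e.source`
  have hev : ∀ᶠ y in 𝓝 y₀, L y t ∈ e.source :=
    hLc.preimage_mem_nhds (e.open_source.mem_nhds hq)
  obtain ⟨δ₂, hδ₂, hball2⟩ := Metric.eventually_nhds_iff_ball.1 hev
  refine ⟨min δ (min δ₁ δ₂), by positivity, fun y s => if s ≤ t then L y s else e.symm (s • y),
    ?_, ?_⟩
  · intro y hy
    have hy0 : y ∈ ball y₀ δ := (ball_subset_ball (min_le_left _ _)) hy
    have hy1 : y ∈ ball y₀ δ₁ := (ball_subset_ball ((min_le_right _ _).trans (min_le_left _ _))) hy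
    have hy2 : L y t ∈ e.source :=
      hball2 _ ((ball_subset_ball ((min_le_right _ _).trans (min_le_right _ _))) hy)
    have hLy := hL y hy0
    have hjt : e.symm (t • y) = L y t := by
      have : t • y = f (L y t) := (hLy.2.2 t ⟨ht0, le_refl t⟩).symm
      rw [this, ← hef]
      exact e.left_inv hy2
    have hfval : ∀ s ∈ Icc t r, f (e.symm (s • y)) = s • y := by
      intro s hs
      rw [← hef]
      exact e.right_inv (h1 y hy1 s hs)
    refine ⟨?_, ?_, ?_⟩
    · -- continuity
      have hun : Icc (0:ℝ) r = Icc 0 t ∪ Icc t r := (Icc_union_Icc_eq_Icc ht0 htr.le).symm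
      have hpiece1 : ContinuousOn (fun s => if s ≤ t then L y s else e.symm (s • y)) (Icc 0 t) := by
        refine hLy.1.congr ?_
        intro s hs
        simp [if_pos hs.2]
      have hpiece2 : ContinuousOn (fun s => if s ≤ t then L y s else e.symm (s • y)) (Icc t r) := by
        have hbase : ContinuousOn (fun s : ℝ => e.symm (s • y)) (Icc t r) := by
          refine e.continuousOn_symm.comp ((continuous_id.smul continuous_const).continuousOn) ?_
          intro s hs
          exact h1 y hy1 s hs
        refine hbase.congr ?_
        intro s hs
        by_cases hst' : s ≤ t
        · have : s = t := le_antisymm hst' hs.1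
          subst this
          simp [if_pos le_rfl, hjt]
        · simp [if_neg hst']
      rw [hun]
      intro s hs
      refine ContinuousWithinAt.union ?_ ?_
      · by_cases h : s ∈ Icc (0:ℝ) t
        · exact hpiece1 s h
        · exact continuousWithinAt_of_notMem_closure (by rwa [isClosed_Icc.closure_eq])
      · by_cases h : s ∈ Icc t r
        · exact hpiece2 s h
        · exact continuousWithinAt_of_notMem_closure (by rwa [isClosed_Icc.closure_eq])
    · simp only [if_pos ht0]
      exact hLy.2.1
    · intro s hs
      by_cases hst' : s ≤ t
      · simp only [if_pos hst']
        exact hLy.2.2 s ⟨hs.1, hst'⟩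
      · simp only [if_neg hst']
        exact hfval s ⟨(not_le.1 hst').le, hs.2⟩
  · have heq : (fun y => if r ≤ t then L y r else e.symm (r • y)) = fun y => e.symm (r • y) := by
      funext y
      rw [if_neg (not_le.2 htr)]
    simp only [heq]
    have hmem : r • y₀ ∈ e.symm.source := by
      rw [e.symm_source]
      exact htgt r ⟨htr.le, le_refl r⟩
    exact (e.symm.continuousAt hmem).comp ((continuous_const_smul r).continuousAt)


lemma liftH_global (hst : ∀ x, HasStrictFDerivAt f (φ x : X →L[ℝ] X) x)
    {M : ℝ} (hM : 0 < M) (hbound : ∀ x, ‖((φ x).symm : X →L[ℝ] X)‖ ≤ M)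
    (hf0 : f 0 = 0) (y₀ : X) :
    ∃ δ > 0, ∃ L : X → ℝ → X,
      (∀ y ∈ ball y₀ δ, IsLiftH f y 1 (L y)) ∧ ContinuousAt (fun y => L y 1) y₀ := by
  set Q : ℝ → Prop := fun t => ∃ δ > 0, ∃ L : X → ℝ → X,
      (∀ y ∈ ball y₀ δ, IsLiftH f y t (L y)) ∧ ContinuousAt (fun y => L y t) y₀ with hQdef
  have hQ0 : Q 0 := by
    refine ⟨1, one_pos, fun _ _ => 0, fun y hy => ⟨continuousOn_const, rfl, ?_⟩,
      continuousAt_const⟩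
    intro s hs
    have hs0 : s = 0 := le_antisymm hs.2 hs.1
    rw [hs0, zero_smul]
    exact hf0
  set A : Set ℝ := {t : ℝ | t ∈ Icc (0:ℝ) 1 ∧ Q t} with hAdef
  have h0A : (0:ℝ) ∈ A := ⟨⟨le_refl 0, zero_le_one⟩, hQ0⟩
  have hAne : A.Nonempty := ⟨0, h0A⟩
  have hAbdd : BddAbove A := ⟨1, fun t ht => ht.1.2⟩
  set T := sSup A with hTdef
  have hT0 : 0 ≤ T := le_csSup hAbdd h0A
  have hT1 : T ≤ 1 := csSup_le hAne fun t ht => ht.1.2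
  obtain ⟨ts, hmono, htend, htsA⟩ := exists_seq_tendsto_sSup hAne hAbdd
  have htsT : ∀ n, ts n ≤ T := fun n => le_csSup hAbdd (htsA n)
  have hts0 : ∀ n, 0 ≤ ts n := fun n => (htsA n).1.1
  have hex : ∀ n, ∃ x, IsLiftH f y₀ (ts n) x := by
    intro n
    obtain ⟨δ, hδ, L, hL, -⟩ := (htsA n).2
    exact ⟨L y₀, hL y₀ (mem_ball_self hδ)⟩
  choose xs hxs using hex
  set pp : ℕ → X := fun n => xs n (ts n) with hppdef
  set C := M * ‖y₀‖ with hCdef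
  have hC0 : 0 ≤ C := mul_nonneg hM.le (norm_nonneg _)
  have hdist : ∀ m k, m ≤ k → dist (pp m) (pp k) ≤ C * (ts k - ts m) := by
    intro m k hmk
    have hlift : IsLiftH f y₀ (ts m) (xs k) := (hxs k).mono (hts0 m) (hmono hmk)
    have heq : xs k (ts m) = pp m :=
      liftH_unique hst (hts0 m) hlift (hxs m) (right_mem_Icc.2 (hts0 m))
    have hlip := liftH_lipschitz hst hbound (hxs k)
      (⟨hts0 m, hmono hmk⟩ : ts m ∈ Icc 0 (ts k)) (right_mem_Icc.2 (hts0 k)) (hmono hmk)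
    rw [heq] at hlip
    rw [dist_comm, dist_eq_norm]
    exact hlip
  have hb0 : Tendsto (fun n => C * (T - ts n)) atTop (𝓝 0) := by
    have h1 : Tendsto (fun n => T - ts n) atTop (𝓝 0) := by
      simpa [hTdef] using (tendsto_const_nhds (x := T) (f := atTop)).sub htend
    simpa using h1.const_mul C
  have hcauchy : CauchySeq pp := by
    refine cauchySeq_of_le_tendsto_0 (fun n => C * (T - ts n)) ?_ hb0
    intro n m N hNn hNm
    rcases le_total n m with h | h
    · refine (hdist n m h).trans ?_
      apply mul_le_mul_of_nonneg_left _ hC0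
      have := htsT m
      have := hmono hNn
      linarith
    · rw [dist_comm]
      refine (hdist m n h).trans ?_
      apply mul_le_mul_of_nonneg_left _ hC0
      have := htsT n
      have := hmono hNm
      linarith
  obtain ⟨p, hp⟩ := cauchySeq_tendsto_of_complete hcauchy
  have hfp : f p = T • y₀ := by
    have h1 : Tendsto (fun n => f (pp n)) atTop (𝓝 (f p)) :=
      ((hst p).hasFDerivAt.continuousAt.tendsto).comp hp
    have h2 : ∀ n, f (pp n) = ts n • y₀ := fun n =>
      (hxs n).2.2 (ts n) (right_mem_Icc.2 (hts0 n))
    have h3 : Tendsto (fun n => ts n • y₀) atTop (𝓝 (T • y₀)) := htend.smul_const y₀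
    refine tendsto_nhds_unique ?_ h3
    simpa [h2] using h1
  set e := (hst p).toOpenPartialHomeomorph f with hedef
  have hpe : p ∈ e.source := (hst p).mem_toOpenPartialHomeomorph_source
  obtain ⟨r, hr, hball⟩ := Metric.isOpen_iff.1 e.open_source p hpe
  obtain ⟨N, hN⟩ : ∃ N, C * (T - ts N) < r / 2 :=
    (hb0.eventually (gt_mem_nhds (half_pos hr))).exists
  have hppdist : ∀ m, N ≤ m → dist (pp m) p ≤ C * (T - ts N) := by
    intro m hm
    have htd : Tendsto (fun k => dist (pp m) (pp k)) atTop (𝓝 (dist (pp m) p)) :=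
      tendsto_const_nhds.dist hp
    refine le_of_tendsto htd ?_
    filter_upwards [eventually_ge_atTop m] with k hk
    refine (hdist m k hk).trans ?_
    apply mul_le_mul_of_nonneg_left _ hC0
    have := htsT k
    have := hmono hm
    linarith
  have hQT : Q T := by
    rcases eq_or_lt_of_le (htsT N) with heq | hlt
    · rw [← heq]; exact (htsA N).2
    · refine liftH_extend (hts0 N) hlt (htsA N).2 e rfl ?_ ?_
      · intro x hx
        have hxeq : x (ts N) = pp N :=
          liftH_unique hst (hts0 N) hx (hxs N) (right_mem_Icc.2 (hts0 N))
        rw [hxeq]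
        apply hball
        rw [mem_ball]
        calc dist (pp N) p ≤ C * (T - ts N) := hppdist N le_rfl
          _ < r / 2 := hN
          _ < r := by linarith
      · intro s hs
        rcases eq_or_lt_of_le hs.2 with hsT | hsT
        · rw [hsT, ← hfp]
          exact e.map_source hpe
        · obtain ⟨m, hm1, hm2⟩ : ∃ m, N ≤ m ∧ s ≤ ts m := by
            have h1 : ∀ᶠ m in atTop, s < ts m := htend.eventually (eventually_gt_nhds hsT)
            have h2 : ∀ᶠ m in atTop, N ≤ m := eventually_ge_atTop N
            obtain ⟨m, hm2, hm1⟩ := (h1.and h2).exists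
            exact ⟨m, hm1, hm2.le⟩
          have hs0 : 0 ≤ s := le_trans (hts0 N) hs.1
          have hsmem : s ∈ Icc 0 (ts m) := ⟨hs0, hm2⟩
          have hfq : f (xs m s) = s • y₀ := (hxs m).2.2 s hsmem
          have hq1 : ‖xs m (ts m) - xs m s‖ ≤ C * (ts m - s) :=
            liftH_lipschitz hst hbound (hxs m) hsmem (right_mem_Icc.2 (hts0 m)) hm2
          have hdq : dist (xs m s) p < r := by
            calc dist (xs m s) p ≤ dist (xs m s) (pp m) + dist (pp m) p := dist_triangle _ _ _
              _ ≤ C * (ts m - s) + C * (T - ts N) := by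
                  refine add_le_add ?_ (hppdist m hm1)
                  rw [dist_eq_norm, ← norm_neg, neg_sub]
                  exact hq1
              _ ≤ C * (T - ts N) + C * (T - ts N) := by
                  have h3 : ts m - s ≤ T - ts N := by
                    have := htsT m
                    have := hs.1
                    linarith
                  have := mul_le_mul_of_nonneg_left h3 hC0
                  linarith
              _ < r / 2 + r / 2 := by linarith
              _ = r := by ring
          have hxsrc : xs m s ∈ e.source := hball (mem_ball.2 hdq)
          rw [← hfq]
          exact e.map_source hxsrc
  rcases eq_or_lt_of_le hT1 with hT1' | hT1'
  · rw [← hT1']; exact hQT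
  · exfalso
    obtain ⟨δ, hδ, L, hL, hLc⟩ := hQT
    have hqlift : IsLiftH f y₀ T (L y₀) := hL y₀ (mem_ball_self hδ)
    set q := L y₀ T with hqdef
    set e' := (hst q).toOpenPartialHomeomorph f with he'def
    have hfq : f q = T • y₀ := hqlift.2.2 T (right_mem_Icc.2 hT0)
    have htar : T • y₀ ∈ e'.target := hfq ▸ (hst q).image_mem_toOpenPartialHomeomorph_target
    have hev : ∀ᶠ s in 𝓝 T, s • y₀ ∈ e'.target := by
      have hco : Continuous fun s : ℝ => s • y₀ := continuous_id.smul continuous_const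
      exact hco.continuousAt.preimage_mem_nhds (e'.open_target.mem_nhds htar)
    obtain ⟨ε, hε, hball'⟩ := Metric.eventually_nhds_iff_ball.1 hev
    set r' := min 1 (T + ε / 2) with hr'def
    have hTr : T < r' := lt_min hT1' (by linarith)
    have hQr : Q r' := by
      refine liftH_extend hT0 hTr ⟨δ, hδ, L, hL, hLc⟩ e' rfl ?_ ?_
      · intro x hx
        have hxeq : x T = q :=
          liftH_unique hst hT0 hx hqlift (right_mem_Icc.2 hT0)
        rw [hxeq]
        exact (hst q).mem_toOpenPartialHomeomorph_source
      · intro s hs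
        apply hball'
        rw [mem_ball, Real.dist_eq, abs_of_nonneg (by linarith [hs.1])]
        have : s ≤ T + ε / 2 := hs.2.trans (min_le_right _ _)
        linarith
    have hrA : r' ∈ A := ⟨⟨le_trans hT0 hTr.le, min_le_left _ _⟩, hQr⟩
    exact absurd (le_csSup hAbdd hrA) (not_le.2 hTr)


end Hadamard

/-- Under Hadamard's hypotheses, if `f 0 = 0` and `0 ∈ K` with `K` compact,
then `f` has a continuous right inverse `g` on `K` with `g 0 = 0`. -/
theorem hadamard_right_inverse_on_compact_zero
    {X : Type*} [NormedAddCommGroup X] [NormedSpace ℝ X] [CompleteSpace X]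
    (f : X → X) (φ : X → X ≃L[ℝ] X) (M : ℝ) (hM : 0 < M)
    (hdf : ∀ x, HasFDerivAt f (φ x : X →L[ℝ] X) x)
    (hcont : Continuous fun x => (φ x : X →L[ℝ] X))
    (hbound : ∀ x, ‖((φ x).symm : X →L[ℝ] X)‖ ≤ M)
    (K : Set X) (hK : IsCompact K) (hf0 : f 0 = 0) (h0K : (0 : X) ∈ K) :
    ∃ g : X → X, ContinuousOn g K ∧ (∀ y ∈ K, f (g y) = y) ∧ g 0 = 0 := by
  have hst : ∀ x, HasStrictFDerivAt f (φ x : X →L[ℝ] X) x := fun x =>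
    hasStrictFDerivAt_of_hasFDerivAt_of_continuousAt
      (Filter.Eventually.of_forall hdf) hcont.continuousAt
  have main : ∀ y₀ : X, ∃ δ > 0, ∃ L : X → ℝ → X,
      (∀ y ∈ Metric.ball y₀ δ, IsLiftH f y 1 (L y)) ∧ ContinuousAt (fun y => L y 1) y₀ :=
    fun y₀ => liftH_global hst hM hbound hf0 y₀
  have hex : ∀ y, ∃ x, IsLiftH f y 1 x := by
    intro y
    obtain ⟨δ, hδ, L, hL, -⟩ := main y
    exact ⟨L y, hL y (Metric.mem_ball_self hδ)⟩
  choose lf hlf using hex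
  have hgc : Continuous fun y => lf y 1 := by
    rw [continuous_iff_continuousAt]
    intro y₀
    obtain ⟨δ, hδ, L, hL, hLc⟩ := main y₀
    refine hLc.congr ?_
    filter_upwards [Metric.ball_mem_nhds y₀ hδ] with y hy
    exact (liftH_unique hst zero_le_one (hlf y) (hL y hy)
      (Set.right_mem_Icc.2 zero_le_one)).symm
  refine ⟨fun y => lf y 1, hgc.continuousOn, ?_, ?_⟩
  · intro y _
    have := (hlf y).2.2 1 (Set.right_mem_Icc.2 zero_le_one)
    rwa [one_smul] at this
  · have hzero : IsLiftH f 0 1 (fun _ => (0 : X)) := by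
      refine ⟨continuousOn_const, rfl, ?_⟩
      intro s _
      rw [smul_zero]
      exact hf0
    exact liftH_unique hst zero_le_one (hlf 0) hzero (Set.right_mem_Icc.2 zero_le_one)
end

section
/- Let X be a Banach space and let μ : X → ℝ⁺ ∪ {∞} be a lower semicontinuous function with nonnegative values. Suppose that for some r > 0 the following holds: for every x ∈ X with 0 < μ(x) < ∞ there exists y ∈ X such that μ(y) < μ(x) − r·‖y − x‖. Then for every x ∈ X with μ(x) < ∞ there exists y ∈ X such that μ(y) = 0 and r·‖y − x‖ ≤ μ(x). -/
open ENNReal in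
/-- A precursor to Ekeland's variational principle: if the lower semicontinuous
function `μ : X → [0, ∞]` can be strictly decreased at rate `r` at every point
where it is finite and positive, then from every point `x` of its domain one
can reach a zero of `μ` within distance `μ x / r`. -/
theorem decrease_principle
    {X : Type*} [NormedAddCommGroup X] [NormedSpace ℝ X] [CompleteSpace X]
    (μ : X → ℝ≥0∞) (hlsc : LowerSemicontinuous μ) (r : ℝ) (hr : 0 < r)
    (hdec : ∀ x, 0 < μ x → μ x < ⊤ →
      ∃ y, μ y + ENNReal.ofReal (r * ‖y - x‖) < μ x) :
    ∀ x, μ x < ⊤ → ∃ y, μ y = 0 ∧ ENNReal.ofReal (r * ‖y - x‖) ≤ μ x := by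
  intro x hx
  set S : X → Set X := fun a => {b | μ b + ENNReal.ofReal (r * ‖b - a‖) ≤ μ a} with hSdef
  have self_mem : ∀ a, a ∈ S a := by
    intro a; simp [hSdef]
  have htrans : ∀ {a b c : X}, b ∈ S a → c ∈ S b → c ∈ S a := by
    intro a b c hb hc
    have hnorm : ‖c - a‖ ≤ ‖c - b‖ + ‖b - a‖ := by
      simpa [dist_eq_norm] using dist_triangle c b a
    have h1 : ENNReal.ofReal (r * ‖c - a‖) ≤
        ENNReal.ofReal (r * ‖c - b‖) + ENNReal.ofReal (r * ‖b - a‖) := by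
      rw [← ENNReal.ofReal_add (by positivity) (by positivity)]
      exact ENNReal.ofReal_le_ofReal (by nlinarith [norm_nonneg (c - b), norm_nonneg (b - a)])
    calc μ c + ENNReal.ofReal (r * ‖c - a‖)
        ≤ μ c + (ENNReal.ofReal (r * ‖c - b‖) + ENNReal.ofReal (r * ‖b - a‖)) := by
          exact add_le_add_right h1 _
      _ = (μ c + ENNReal.ofReal (r * ‖c - b‖)) + ENNReal.ofReal (r * ‖b - a‖) := by ring
      _ ≤ μ b + ENNReal.ofReal (r * ‖b - a‖) := add_le_add_left hc _
      _ ≤ μ a := hb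
  set m : X → ℝ≥0∞ := fun a => ⨅ b ∈ S a, μ b with hmdef
  have key : ∀ (a : X) (n : ℕ), ∃ b, b ∈ S a ∧ μ b ≤ m a + 2⁻¹ ^ n := by
    intro a n
    by_cases h : m a = ⊤
    · exact ⟨a, self_mem a, by simp [h]⟩
    · have hlt : m a < m a + 2⁻¹ ^ n := by
        refine ENNReal.lt_add_right h ?_
        simp [pow_eq_zero_iff]
      rw [hmdef] at hlt
      simp only [iInf_lt_iff, exists_prop] at hlt
      obtain ⟨b, hbS, hb⟩ := hlt
      exact ⟨b, hbS, hb.le⟩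
  set u : ℕ → X := fun n => Nat.rec x (fun k xk => (key xk k).choose) n with hudef
  have hu0 : u 0 = x := rfl
  have huS : ∀ n, u (n + 1) ∈ S (u n) := fun n => (key (u n) n).choose_spec.1
  have huM : ∀ n, μ (u (n + 1)) ≤ m (u n) + 2⁻¹ ^ n := fun n => (key (u n) n).choose_spec.2
  have hchain : ∀ n k, u (n + k) ∈ S (u n) := by
    intro n k
    induction k with
    | zero => exact self_mem _
    | succ k ih => exact htrans ih (huS (n + k))
  -- partial sums are bounded
  have hsum : ∀ n, (∑ k ∈ Finset.range n, ENNReal.ofReal (r * ‖u (k + 1) - u k‖)) + μ (u n)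
      ≤ μ x := by
    intro n
    induction n with
    | zero => simp [hu0]
    | succ n ih =>
      rw [Finset.sum_range_succ]
      calc (∑ k ∈ Finset.range n, ENNReal.ofReal (r * ‖u (k + 1) - u k‖))
            + ENNReal.ofReal (r * ‖u (n + 1) - u n‖) + μ (u (n + 1))
          = (∑ k ∈ Finset.range n, ENNReal.ofReal (r * ‖u (k + 1) - u k‖))
            + (μ (u (n + 1)) + ENNReal.ofReal (r * ‖u (n + 1) - u n‖)) := by ring
        _ ≤ (∑ k ∈ Finset.range n, ENNReal.ofReal (r * ‖u (k + 1) - u k‖)) + μ (u n) :=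
            add_le_add_right (huS n) _
        _ ≤ μ x := ih
  have htsum : (∑' k, ENNReal.ofReal (r * ‖u (k + 1) - u k‖)) ≤ μ x :=
    ENNReal.tsum_le_of_sum_range_le fun n =>
      le_trans (le_add_right (le_refl _)) (hsum n)
  have hfin : (∑' k, ENNReal.ofReal (r * ‖u (k + 1) - u k‖)) ≠ ⊤ :=
    (lt_of_le_of_lt htsum hx).ne
  have hsummable : Summable fun k => ‖u (k + 1) - u k‖ := by
    have h1 := ENNReal.summable_toReal hfin
    have h2 : Summable fun k => r * ‖u (k + 1) - u k‖ := by
      convert h1 using 2 with k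
      rw [ENNReal.toReal_ofReal (by positivity)]
    have := h2.mul_left r⁻¹
    exact this.congr fun k => inv_mul_cancel_left₀ hr.ne' _
  have hcauchy : CauchySeq u := by
    apply cauchySeq_of_summable_dist
    simpa [dist_eq_norm, norm_sub_rev] using hsummable
  obtain ⟨y, hy⟩ := cauchySeq_tendsto_of_complete hcauchy
  -- y belongs to every S (u n) by closedness of sublevel sets
  have hyS : ∀ n, y ∈ S (u n) := by
    intro n
    have hlsc2 : LowerSemicontinuous fun b => μ b + ENNReal.ofReal (r * ‖b - u n‖) := by
      apply hlsc.add
      exact (ENNReal.continuous_ofReal.comp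
        ((continuous_const.mul ((continuous_id.sub continuous_const).norm)))).lowerSemicontinuous
    have hclosed : IsClosed {b | μ b + ENNReal.ofReal (r * ‖b - u n‖) ≤ μ (u n)} :=
      hlsc2.isClosed_preimage (μ (u n))
    refine hclosed.mem_of_tendsto hy ?_
    filter_upwards [Filter.eventually_ge_atTop n] with k hk
    have : u (n + (k - n)) ∈ S (u n) := hchain n (k - n)
    rwa [Nat.add_sub_cancel' hk] at this
  have hymem : μ y + ENNReal.ofReal (r * ‖y - x‖) ≤ μ x := by
    have := hyS 0; rwa [hu0] at this
  have hyfin : μ y < ⊤ := lt_of_le_of_lt (le_trans (le_add_right (le_refl _)) hymem) hx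
  have hy0 : μ y = 0 := by
    by_contra h0
    have hpos : 0 < μ y := pos_iff_ne_zero.mpr h0
    obtain ⟨z, hz⟩ := hdec y hpos hyfin
    have hzS : z ∈ S y := hz.le
    have hzlt : μ z < μ y := lt_of_le_of_lt (le_add_right (le_refl _)) hz
    have hzb : ∀ n, μ y ≤ μ z + 2⁻¹ ^ n := by
      intro n
      have hzSn : z ∈ S (u n) := htrans (hyS n) hzS
      have hmz : m (u n) ≤ μ z := by
        rw [hmdef]
        exact iInf₂_le z hzSn
      have hyμ : μ y ≤ μ (u (n + 1)) :=
        le_trans (le_add_right (le_refl _)) (hyS (n + 1))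
      calc μ y ≤ μ (u (n + 1)) := hyμ
        _ ≤ m (u n) + 2⁻¹ ^ n := huM n
        _ ≤ μ z + 2⁻¹ ^ n := add_le_add_left hmz _
    have hle : μ y ≤ μ z := by
      have hpow : Filter.Tendsto (fun n : ℕ => μ z + 2⁻¹ ^ n) Filter.atTop (nhds (μ z + 0)) := by
        apply Filter.Tendsto.add tendsto_const_nhds
        exact ENNReal.tendsto_pow_atTop_nhds_zero_of_lt_one
          (by simp [ENNReal.inv_lt_one, ENNReal.one_lt_two])
      rw [add_zero] at hpow
      exact ge_of_tendsto hpow (Filter.Eventually.of_forall hzb)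
    exact absurd hle (not_le.mpr hzlt)
  refine ⟨y, hy0, ?_⟩
  calc ENNReal.ofReal (r * ‖y - x‖) = μ y + ENNReal.ofReal (r * ‖y - x‖) := by rw [hy0, zero_add]
    _ ≤ μ x := hymem
end

section
/- Let X be a Banach space and let f : X → X be continuously (Fréchet) differentiable with f'(x) invertible for all x ∈ X and ‖[f'(x)]⁻¹‖ ≤ M for all x ∈ X, for some M > 0. Let K ⊆ X be a nonempty compact set and define μ(g) = max_{y∈K} ‖f(g(y)) − y‖ for continuous g : K → X. Then for every continuous ĝ : K → X with μ(ĝ) > 0 there exists a continuous g : K → X, g ≠ ĝ, such that μ(g) < μ(ĝ) − (1/(2M)) · max_{y∈K} ‖g(y) − ĝ(y)‖. -/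
/-- Key decrease step in the Ekeland–Séré scheme: under Hadamard's hypotheses,
with `μ g = max_{y∈K} ‖f (g y) - y‖` on continuous maps on a nonempty compact
`K`, every `ghat` with `μ ghat > 0` admits a continuous `g ≠ ghat` with
`μ g < μ ghat - (1/(2M)) · max_{y∈K} ‖g y - ghat y‖`. -/
theorem mu_decrease_step
    {X : Type*} [NormedAddCommGroup X] [NormedSpace ℝ X] [CompleteSpace X]
    (f : X → X) (φ : X → X ≃L[ℝ] X) (M : ℝ) (hM : 0 < M)
    (hdf : ∀ x, HasFDerivAt f (φ x : X →L[ℝ] X) x)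
    (hcont : Continuous fun x => (φ x : X →L[ℝ] X))
    (hbound : ∀ x, ‖((φ x).symm : X →L[ℝ] X)‖ ≤ M)
    (K : Set X) (hK : IsCompact K) (hKne : K.Nonempty)
    (ghat : X → X) (hghat : ContinuousOn ghat K)
    (hpos : 0 < sSup ((fun y => ‖f (ghat y) - y‖) '' K)) :
    ∃ g : X → X, ContinuousOn g K ∧ (∃ y ∈ K, g y ≠ ghat y) ∧
      sSup ((fun y => ‖f (g y) - y‖) '' K) <
        sSup ((fun y => ‖f (ghat y) - y‖) '' K)
          - (1 / (2 * M)) * sSup ((fun y => ‖g y - ghat y‖) '' K) := by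
  classical
  set d : X → ℝ := fun y => ‖f (ghat y) - y‖ with hd_def
  have hfc : Continuous f := continuous_iff_continuousAt.2 fun x => (hdf x).continuousAt
  have hdK : ContinuousOn d K := ((hfc.comp_continuousOn hghat).sub continuousOn_id).norm
  set μ : ℝ := sSup (d '' K) with hμ_def
  have hμpos : 0 < μ := hpos
  -- continuity of the inverse derivative family
  have hinv_cont : Continuous fun x => (((φ x).symm : X →L[ℝ] X)) := by
    have heq : (fun x => (((φ x).symm : X →L[ℝ] X)))
        = fun x => Ring.inverse ((φ x : X →L[ℝ] X)) := funext fun x => by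
      rw [ContinuousLinearMap.ringInverse_eq_inverse, ContinuousLinearMap.inverse_equiv]
    rw [heq, continuous_iff_continuousAt]
    intro x
    have h1 : ContinuousAt (Ring.inverse : (X →L[ℝ] X) → (X →L[ℝ] X)) ((φ x : X →L[ℝ] X)) :=
      NormedRing.inverse_continuousAt (φ x).toUnit
    exact ContinuousAt.comp (x := x) (g := (Ring.inverse : (X →L[ℝ] X) → (X →L[ℝ] X)))
      (f := fun x => ((φ x : X →L[ℝ] X))) h1 hcont.continuousAt
  -- the Newton direction
  set v : X → X := fun y => ((φ (ghat y)).symm : X →L[ℝ] X) (f (ghat y) - y) with hv_def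
  have hv : ContinuousOn v K :=
    (hinv_cont.comp_continuousOn hghat).clm_apply
      ((hfc.comp_continuousOn hghat).sub continuousOn_id)
  have hφv : ∀ y, (φ (ghat y)) (v y) = f (ghat y) - y := fun y =>
    (φ (ghat y)).apply_symm_apply _
  have hdnn : ∀ y, 0 ≤ d y := fun y => norm_nonneg _
  have hdbdd : BddAbove (d '' K) := (hK.image_of_continuousOn hdK).bddAbove
  have hdμ : ∀ y ∈ K, d y ≤ μ := fun y hy => le_csSup hdbdd ⟨y, hy, rfl⟩
  have hvb : ∀ y ∈ K, ‖v y‖ ≤ M * μ := by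
    intro y hy
    calc ‖v y‖ ≤ ‖((φ (ghat y)).symm : X →L[ℝ] X)‖ * ‖f (ghat y) - y‖ :=
          ContinuousLinearMap.le_opNorm _ _
      _ ≤ M * μ := mul_le_mul (hbound _) (hdμ y hy) (hdnn y) hM.le
  -- a compact set containing all the segments
  set ψ : X × ℝ → X := fun p => ghat p.1 - p.2 • v p.1 with hψ_def
  have hψc : ContinuousOn ψ (K ×ˢ Set.Icc (0:ℝ) 1) := by
    apply ContinuousOn.sub
    · exact hghat.comp continuous_fst.continuousOn fun p hp => hp.1
    · exact continuous_snd.continuousOn.smul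
        (hv.comp continuous_fst.continuousOn fun p hp => hp.1)
  have hPcomp : IsCompact (ψ '' (K ×ˢ Set.Icc (0:ℝ) 1)) :=
    (hK.prod isCompact_Icc).image_of_continuousOn hψc
  set P := ψ '' (K ×ˢ Set.Icc (0:ℝ) 1) with hP_def
  -- uniform continuity of the derivative on P
  set ε : ℝ := 1 / (4 * M) with hε_def
  have hεpos : 0 < ε := by positivity
  obtain ⟨δ, hδpos, hδ⟩ := Metric.uniformContinuousOn_iff.1
    (hPcomp.uniformContinuousOn_of_continuous hcont.continuousOn) ε hεpos
  set B : ℝ := M * μ + 1 with hB_def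
  have hBpos : 0 < B := by positivity
  set t : ℝ := min 1 (δ / (2 * B)) with ht_def
  have htpos : 0 < t := lt_min one_pos (by positivity)
  have ht1 : t ≤ 1 := min_le_left _ _
  have htB : t * B < δ := by
    have h1 : t * (2 * B) ≤ δ :=
      (le_div_iff₀ (by positivity : (0:ℝ) < 2 * B)).1 (min_le_right _ _)
    linarith
  -- the improved map
  set g : X → X := fun y => ghat y - t • v y with hg_def
  have hgc : ContinuousOn g K := hghat.sub (continuousOn_const.smul hv)
  -- membership of segment points in P
  have hmemP : ∀ y ∈ K, ∀ s ∈ Set.Icc (0:ℝ) 1, ghat y - s • v y ∈ P := by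
    intro y hy s hs
    exact ⟨(y, s), ⟨hy, hs⟩, rfl⟩
  -- key pointwise estimate
  have hkey : ∀ y ∈ K, ‖f (g y) - y‖ ≤ (1 - t) * μ + ε * (t * (M * μ)) := by
    intro y hy
    set x := ghat y with hx_def
    have hseg : ∀ z ∈ segment ℝ x (g y), ∃ c, 0 ≤ c ∧ c ≤ t ∧ z = x - c • v y := by
      intro z hz
      rcases hz with ⟨a, b, ha, hb, hab, rfl⟩
      refine ⟨b * t, by positivity, ?_, ?_⟩
      · calc b * t ≤ 1 * t := mul_le_mul_of_nonneg_right (by linarith) htpos.le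
          _ = t := one_mul t
      · have : a • x + b • (x - t • v y) = (a + b) • x - (b * t) • v y := by
          rw [smul_sub, add_smul, smul_smul]; abel
        rw [this, hab, one_smul]
    have hsegP : ∀ z ∈ segment ℝ x (g y), z ∈ P := by
      intro z hz
      obtain ⟨c, hc0, hct, rfl⟩ := hseg z hz
      exact hmemP y hy c ⟨hc0, hct.trans ht1⟩
    have hxP : x ∈ P := by
      have := hmemP y hy 0 ⟨le_refl 0, zero_le_one⟩
      simpa using this
    have hbnd : ∀ z ∈ segment ℝ x (g y),
        ‖(φ z : X →L[ℝ] X) - (φ x : X →L[ℝ] X)‖ ≤ ε := by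
      intro z hz
      obtain ⟨c, hc0, hct, hzeq⟩ := hseg z hz
      have hdist : dist z x < δ := by
        rw [dist_eq_norm, hzeq]
        have he : x - c • v y - x = -(c • v y) := by abel
        rw [he, norm_neg, norm_smul, Real.norm_eq_abs, abs_of_nonneg hc0]
        have h1 : ‖v y‖ ≤ B := le_trans (hvb y hy) (by linarith)
        have h2 : c * ‖v y‖ ≤ t * B :=
          mul_le_mul hct h1 (norm_nonneg _) htpos.le
        linarith
      have := hδ z (hsegP z hz) x hxP hdist
      rw [dist_eq_norm] at this
      exact this.le
    have hmvt := (convex_segment x (g y)).norm_image_sub_le_of_norm_hasFDerivWithin_le'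
      (fun z _ => (hdf z).hasFDerivWithinAt) hbnd
      (left_mem_segment ℝ x (g y)) (right_mem_segment ℝ x (g y))
    -- rewrite the linear term
    have hgyx : g y - x = -(t • v y) := by
      simp only [hg_def]; abel
    have hlin : (φ x : X →L[ℝ] X) (g y - x) = -(t • (f x - y)) := by
      rw [hgyx, map_neg, map_smul]
      congr 2
      exact hφv y
    have hnorm_gyx : ‖g y - x‖ = t * ‖v y‖ := by
      rw [hgyx, norm_neg, norm_smul, Real.norm_eq_abs, abs_of_nonneg htpos.le]
    have hdecomp : f (g y) - y
        = (f (g y) - f x - (φ x : X →L[ℝ] X) (g y - x)) + (1 - t) • (f x - y) := by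
      rw [hlin, sub_smul, one_smul]
      abel
    have hR : ‖f (g y) - f x - (φ x : X →L[ℝ] X) (g y - x)‖ ≤ ε * (t * (M * μ)) := by
      refine hmvt.trans ?_
      rw [hnorm_gyx]
      have : t * ‖v y‖ ≤ t * (M * μ) := mul_le_mul_of_nonneg_left (hvb y hy) htpos.le
      exact mul_le_mul_of_nonneg_left this hεpos.le
    calc ‖f (g y) - y‖
        ≤ ‖f (g y) - f x - (φ x : X →L[ℝ] X) (g y - x)‖ + ‖(1 - t) • (f x - y)‖ := by
          rw [hdecomp]; exact norm_add_le _ _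
      _ ≤ ε * (t * (M * μ)) + (1 - t) * μ := by
          refine add_le_add hR ?_
          rw [norm_smul, Real.norm_eq_abs, abs_of_nonneg (by linarith : (0:ℝ) ≤ 1 - t)]
          exact mul_le_mul_of_nonneg_left (hdμ y hy) (by linarith)
      _ = (1 - t) * μ + ε * (t * (M * μ)) := by ring
  -- witness where g differs from ghat
  obtain ⟨y₀, hy₀K, hy₀⟩ := hK.exists_sSup_image_eq hKne hdK
  have hvy₀ : v y₀ ≠ 0 := by
    intro h
    have h1 : f (ghat y₀) - y₀ = 0 := by
      rw [← hφv y₀, h, map_zero]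
    have h2 : d y₀ = 0 := by simp [hd_def, h1]
    rw [← hy₀] at h2
    exact absurd h2 (ne_of_gt hμpos)
  have hne : g y₀ ≠ ghat y₀ := by
    intro h
    have h' : ghat y₀ - t • v y₀ = ghat y₀ := h
    rw [sub_eq_self] at h'
    exact hvy₀ ((smul_eq_zero.1 h').resolve_left (ne_of_gt htpos))
  refine ⟨g, hgc, ⟨y₀, hy₀K, hne⟩, ?_⟩
  -- bound on the sup of the displacement
  have hSle : sSup ((fun y => ‖g y - ghat y‖) '' K) ≤ t * (M * μ) := by
    apply csSup_le (hKne.image _)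
    rintro r ⟨y, hy, rfl⟩
    show ‖g y - ghat y‖ ≤ t * (M * μ)
    have : g y - ghat y = -(t • v y) := by simp only [hg_def]; abel
    rw [this, norm_neg, norm_smul, Real.norm_eq_abs, abs_of_nonneg htpos.le]
    exact mul_le_mul_of_nonneg_left (hvb y hy) htpos.le
  have hSnn : 0 ≤ sSup ((fun y => ‖g y - ghat y‖) '' K) := by
    obtain ⟨y, hy⟩ := hKne
    have hb : BddAbove ((fun y => ‖g y - ghat y‖) '' K) :=
      (hK.image_of_continuousOn ((hgc.sub hghat).norm)).bddAbove
    exact le_trans (norm_nonneg _) (le_csSup hb ⟨y, hy, rfl⟩)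
  -- assemble the strict inequality
  have hnewle : sSup ((fun y => ‖f (g y) - y‖) '' K) ≤ (1 - t) * μ + ε * (t * (M * μ)) := by
    apply csSup_le (hKne.image _)
    rintro r ⟨y, hy, rfl⟩
    exact hkey y hy
  have hεM : ε * (t * (M * μ)) = t * μ / 4 := by
    rw [hε_def]; field_simp
  have hfinal : (1 - t) * μ + ε * (t * (M * μ))
      < μ - (1 / (2 * M)) * sSup ((fun y => ‖g y - ghat y‖) '' K) := by
    have h1 : (1 / (2 * M)) * sSup ((fun y => ‖g y - ghat y‖) '' K)
        ≤ (1 / (2 * M)) * (t * (M * μ)) :=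
      mul_le_mul_of_nonneg_left hSle (by positivity)
    have h2 : (1 / (2 * M)) * (t * (M * μ)) = t * μ / 2 := by field_simp
    have h3 : 0 < t * μ := by positivity
    rw [hεM]
    linarith
  exact lt_of_le_of_lt hnewle hfinal
end
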